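/- arXiv:0707.2114 — 8 statements merged into one kernel-verified Lean document; each statement's English description precedes it below -/
import Mathlib

section
/- Assume that both A and its transpose A^t satisfy Cuntz–Krieger condition (I). Then for every admissible word μ of length 2 there exist τ_μ ∈ [σ_A]_c and continuous maps k, l : X_A → ℤ≥0 such that σ_A^{k(x)}(τ_μ(x)) = σ_A^{l(x)}(x) for all x ∈ X_A, and such that τ_μ(y) = σ_A(y), k(y) = 0 and l(y) = 1 for every y in the cylinder set U_μ. -/
open Matrix

/-- The one-sided topological Markov shift space `X_A` determined by a square matrix `A`
(with entries in `{0,1}`): sequences `x : ℕ → Fin N` with `A (x n) (x (n+1)) = 1` for all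
`n`, carrying the (subspace of the) product topology. -/
abbrev MarkovShift {N : ℕ} (A : Matrix (Fin N) (Fin N) ℕ) : Type :=
  { x : ℕ → Fin N // ∀ n, A (x n) (x (n + 1)) = 1 }

/-- The shift transformation `σ_A`. -/
def mshift {N : ℕ} (A : Matrix (Fin N) (Fin N) ℕ) :
    MarkovShift A → MarkovShift A :=
  fun x => ⟨fun n => x.1 (n + 1), fun n => x.2 (n + 1)⟩

/-- The orbit `orb_{σ_A}(x) = ⋃_{k≥0} ⋃_{l≥0} σ_A^{-k}(σ_A^l(x))` of `x`. -/
def orb {N : ℕ} (A : Matrix (Fin N) (Fin N) ℕ) (x : MarkovShift A) :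
    Set (MarkovShift A) :=
  { y | ∃ k l : ℕ, (mshift A)^[k] y = (mshift A)^[l] x }

/-- The full group `[σ_A]`: homeomorphisms moving every point within its orbit. -/
def fullGroup {N : ℕ} (A : Matrix (Fin N) (Fin N) ℕ) :
    Set (MarkovShift A ≃ₜ MarkovShift A) :=
  { τ | ∀ x, τ x ∈ orb A x }

/-- The topological full group `[σ_A]_c`: elements of the full group with continuous
orbit cocycles. -/
def topFullGroup {N : ℕ} (A : Matrix (Fin N) (Fin N) ℕ) :
    Set (MarkovShift A ≃ₜ MarkovShift A) :=
  { τ | τ ∈ fullGroup A ∧ ∃ k l : MarkovShift A → ℕ, Continuous k ∧ Continuous l ∧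
      ∀ x, (mshift A)^[k x] (τ x) = (mshift A)^[l x] x }

/-- Cuntz–Krieger condition (I), formulated as: the shift space has no isolated points. -/
def ConditionI {N : ℕ} (A : Matrix (Fin N) (Fin N) ℕ) : Prop :=
  ∀ x : MarkovShift A, ¬ IsOpen ({x} : Set (MarkovShift A))
section MarkovAux

variable {N : ℕ} {A : Matrix (Fin N) (Fin N) ℕ}

lemma coord_cont (i : ℕ) : Continuous fun x : MarkovShift A => x.1 i :=
  (continuous_apply i).comp continuous_subtype_val

lemma cont_dep2 {β : Type*} [TopologicalSpace β] (i1 i2 : ℕ) (F : Fin N → Fin N → β) :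
    Continuous fun x : MarkovShift A => F (x.1 i1) (x.1 i2) := by
  have h : Continuous fun x : MarkovShift A => (x.1 i1, x.1 i2) :=
    (coord_cont i1).prodMk (coord_cont i2)
  exact (continuous_of_discreteTopology
    (f := fun p : Fin N × Fin N => F p.1 p.2)).comp h

lemma cont_dep5 {β : Type*} [TopologicalSpace β] (i1 i2 i3 i4 i5 : ℕ)
    (F : Fin N → Fin N → Fin N → Fin N → Fin N → β) :
    Continuous fun x : MarkovShift A => F (x.1 i1) (x.1 i2) (x.1 i3) (x.1 i4) (x.1 i5) := by
  have h : Continuous fun x : MarkovShift A =>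
      (x.1 i1, x.1 i2, x.1 i3, x.1 i4, x.1 i5) :=
    (coord_cont i1).prodMk ((coord_cont i2).prodMk ((coord_cont i3).prodMk
      ((coord_cont i4).prodMk (coord_cont i5))))
  exact (continuous_of_discreteTopology
    (f := fun p : Fin N × Fin N × Fin N × Fin N × Fin N =>
      F p.1 p.2.1 p.2.2.1 p.2.2.2.1 p.2.2.2.2)).comp h

lemma cont_dep6 {β : Type*} [TopologicalSpace β] (i1 i2 i3 i4 i5 i6 : ℕ)
    (F : Fin N → Fin N → Fin N → Fin N → Fin N → Fin N → β) :
    Continuous fun x : MarkovShift A =>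
      F (x.1 i1) (x.1 i2) (x.1 i3) (x.1 i4) (x.1 i5) (x.1 i6) := by
  have h : Continuous fun x : MarkovShift A =>
      (x.1 i1, x.1 i2, x.1 i3, x.1 i4, x.1 i5, x.1 i6) :=
    (coord_cont i1).prodMk ((coord_cont i2).prodMk ((coord_cont i3).prodMk
      ((coord_cont i4).prodMk ((coord_cont i5).prodMk (coord_cont i6)))))
  exact (continuous_of_discreteTopology
    (f := fun p : Fin N × Fin N × Fin N × Fin N × Fin N × Fin N =>
      F p.1 p.2.1 p.2.2.1 p.2.2.2.1 p.2.2.2.2.1 p.2.2.2.2.2)).comp h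

lemma mshift_iter (m : ℕ) (x : MarkovShift A) (n : ℕ) :
    ((mshift A)^[m] x).1 n = x.1 (n + m) := by
  induction m generalizing x n with
  | zero => rfl
  | succ m ih =>
    rw [Function.iterate_succ_apply, ih]
    show x.1 (n + m + 1) = x.1 (n + (m + 1))
    rw [Nat.add_assoc]

lemma build (μ₀ μ₁ : Fin N)
    (f g : MarkovShift A → MarkovShift A) (hfc : Continuous f) (hgc : Continuous g)
    (hgf : ∀ x, g (f x) = x) (hfg : ∀ x, f (g x) = x)
    (k l : MarkovShift A → ℕ) (hk : Continuous k) (hl : Continuous l)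
    (hcoc : ∀ x, (mshift A)^[k x] (f x) = (mshift A)^[l x] x)
    (hcyl : ∀ y : MarkovShift A, y.1 0 = μ₀ → y.1 1 = μ₁ →
      f y = mshift A y ∧ k y = 0 ∧ l y = 1) :
    ∃ τ ∈ topFullGroup A, ∃ k l : MarkovShift A → ℕ,
      Continuous k ∧ Continuous l ∧
      (∀ x, (mshift A)^[k x] (τ x) = (mshift A)^[l x] x) ∧
      (∀ y : MarkovShift A, y.1 0 = μ₀ → y.1 1 = μ₁ →
        τ y = mshift A y ∧ k y = 0 ∧ l y = 1) :=
  ⟨⟨⟨f, g, hgf, hfg⟩, hfc, hgc⟩,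
    ⟨fun x => ⟨k x, l x, hcoc x⟩, k, l, hk, hl, hcoc⟩,
    k, l, hk, hl, hcoc, hcyl⟩

lemma exists_nu {a : Fin N} (haa : A a a = 1) (hIt : ConditionI Aᵀ) :
    ∃ ν, ν ≠ a ∧ A ν a = 1 := by
  by_contra hc
  push_neg at hc
  refine hIt ⟨fun _ => a, fun n => by rwa [Matrix.transpose_apply]⟩ ?_
  have hset : ((fun y : MarkovShift Aᵀ => y.1 0) ⁻¹' {a}) =
      {(⟨fun _ => a, fun n => by rwa [Matrix.transpose_apply]⟩ : MarkovShift Aᵀ)} := by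
    ext y
    simp only [Set.mem_preimage, Set.mem_singleton_iff]
    constructor
    · intro h0
      apply Subtype.ext; funext n
      show y.1 n = a
      induction n with
      | zero => exact h0
      | succ m ih =>
        have h2 := y.2 m
        rw [Matrix.transpose_apply, ih] at h2
        by_contra hb
        exact hc _ hb h2
    · rintro rfl; rfl
  rw [← hset]
  exact (isOpen_discrete _).preimage (coord_cont 0)

end MarkovAux
section Swap
variable {N : ℕ} (A : Matrix (Fin N) (Fin N) ℕ) (a b : Fin N)

def swapF (hab : A a b = 1) (x : MarkovShift A) : MarkovShift A :=
  ⟨fun n => if x.1 0 = a ∧ x.1 1 = b then x.1 (n + 1)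
    else if x.1 0 = b then (if n = 0 then a else x.1 (n - 1))
    else x.1 n, by
    intro n
    by_cases h1 : x.1 0 = a ∧ x.1 1 = b
    · simp only [if_pos h1]; exact x.2 (n + 1)
    · by_cases h2 : x.1 0 = b
      · simp only [if_neg h1, if_pos h2]
        cases n with
        | zero => simpa [h2] using hab
        | succ k => simpa using x.2 k
      · simp only [if_neg h1, if_neg h2]; exact x.2 n⟩

def swapG (hab : A a b = 1) (y : MarkovShift A) : MarkovShift A :=
  ⟨fun n => if y.1 0 = b then (if n = 0 then a else y.1 (n - 1))
    else if y.1 0 = a ∧ y.1 1 = b then y.1 (n + 1)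
    else y.1 n, by
    intro n
    by_cases h1 : y.1 0 = b
    · simp only [if_pos h1]
      cases n with
      | zero => simpa [h1] using hab
      | succ k => simpa using y.2 k
    · by_cases h2 : y.1 0 = a ∧ y.1 1 = b
      · simp only [if_neg h1, if_pos h2]; exact y.2 (n + 1)
      · simp only [if_neg h1, if_neg h2]; exact y.2 n⟩

variable {A a b}

lemma swapF_coe (hab : A a b = 1) (x : MarkovShift A) (n : ℕ) :
    (swapF A a b hab x).1 n = if x.1 0 = a ∧ x.1 1 = b then x.1 (n + 1)
      else if x.1 0 = b then (if n = 0 then a else x.1 (n - 1))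
      else x.1 n := rfl

lemma swapG_coe (hab : A a b = 1) (y : MarkovShift A) (n : ℕ) :
    (swapG A a b hab y).1 n = if y.1 0 = b then (if n = 0 then a else y.1 (n - 1))
      else if y.1 0 = a ∧ y.1 1 = b then y.1 (n + 1)
      else y.1 n := rfl

lemma swapGF (hab : A a b = 1) (hne : a ≠ b) (x : MarkovShift A) :
    swapG A a b hab (swapF A a b hab x) = x := by
  apply Subtype.ext; funext n
  by_cases h1 : x.1 0 = a ∧ x.1 1 = b
  · have c0 : (swapF A a b hab x).1 0 = b := by
      rw [swapF_coe, if_pos h1]; exact h1.2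
    rw [swapG_coe, if_pos c0]
    cases n with
    | zero => simpa using h1.1.symm
    | succ k =>
      rw [if_neg k.succ_ne_zero, Nat.succ_sub_one, swapF_coe, if_pos h1]
  · by_cases h2 : x.1 0 = b
    · have c0 : (swapF A a b hab x).1 0 = a := by
        rw [swapF_coe, if_neg h1, if_pos h2]; simp
      have c1 : (swapF A a b hab x).1 1 = b := by
        rw [swapF_coe, if_neg h1, if_pos h2]; simpa using h2
      rw [swapG_coe, if_neg (by rw [c0]; exact hne), if_pos ⟨c0, c1⟩,
        swapF_coe, if_neg h1, if_pos h2, if_neg n.succ_ne_zero, Nat.succ_sub_one]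
    · have ceq : ∀ m, (swapF A a b hab x).1 m = x.1 m := fun m => by
        rw [swapF_coe, if_neg h1, if_neg h2]
      simp only [swapG_coe, ceq]
      rw [if_neg h2, if_neg h1]

lemma swapFG (hab : A a b = 1) (hne : a ≠ b) (y : MarkovShift A) :
    swapF A a b hab (swapG A a b hab y) = y := by
  apply Subtype.ext; funext n
  by_cases h1 : y.1 0 = b
  · have c0 : (swapG A a b hab y).1 0 = a := by
      rw [swapG_coe, if_pos h1]; simp
    have c1 : (swapG A a b hab y).1 1 = b := by
      rw [swapG_coe, if_pos h1]; simpa using h1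
    rw [swapF_coe, if_pos ⟨c0, c1⟩, swapG_coe, if_pos h1,
      if_neg n.succ_ne_zero, Nat.succ_sub_one]
  · by_cases h2 : y.1 0 = a ∧ y.1 1 = b
    · have c0 : (swapG A a b hab y).1 0 = b := by
        rw [swapG_coe, if_neg h1, if_pos h2]; exact h2.2
      rw [swapF_coe, if_neg (by rw [c0]; simp [Ne.symm hne]), if_pos c0]
      cases n with
      | zero => simpa using h2.1.symm
      | succ k =>
        rw [if_neg k.succ_ne_zero, Nat.succ_sub_one, swapG_coe, if_neg h1,
          if_pos h2]
    · have ceq : ∀ m, (swapG A a b hab y).1 m = y.1 m := fun m => by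
        rw [swapG_coe, if_neg h1, if_neg h2]
      simp only [swapF_coe, ceq]
      rw [if_neg h2, if_neg h1]

end Swap
section Ins
variable {N : ℕ} (A : Matrix (Fin N) (Fin N) ℕ) (a ν : Fin N)

def insF (haa : A a a = 1) (hva : A ν a = 1) (x : MarkovShift A) : MarkovShift A :=
  ⟨fun n => if x.1 0 = a ∧ x.1 1 = a then x.1 (n + 1)
    else if x.1 0 = a then (if n = 0 then ν else x.1 (n - 1))
    else if x.1 0 = ν ∧ x.1 1 = a then
      (if n = 0 then ν else if n = 1 then a else x.1 (n - 1))
    else x.1 n, by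
    intro n
    by_cases h1 : x.1 0 = a ∧ x.1 1 = a
    · simp only [if_pos h1]; exact x.2 (n + 1)
    · by_cases h2 : x.1 0 = a
      · simp only [if_neg h1, if_pos h2]
        cases n with
        | zero => simpa [h2] using hva
        | succ k => simpa using x.2 k
      · by_cases h3 : x.1 0 = ν ∧ x.1 1 = a
        · simp only [if_neg h1, if_neg h2, if_pos h3]
          match n with
          | 0 => simpa using hva
          | 1 => simpa [h3.2] using haa
          | (j+2) => simpa using x.2 (j + 1)
        · simp only [if_neg h1, if_neg h2, if_neg h3]; exact x.2 n⟩

def insG (haa : A a a = 1) (hva : A ν a = 1) (y : MarkovShift A) : MarkovShift A :=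
  ⟨fun n => if y.1 0 = a then (if n = 0 then a else y.1 (n - 1))
    else if y.1 0 = ν ∧ y.1 1 = a ∧ y.1 2 = a then (if n = 0 then ν else y.1 (n + 1))
    else if y.1 0 = ν ∧ y.1 1 = a then y.1 (n + 1)
    else y.1 n, by
    intro n
    by_cases h1 : y.1 0 = a
    · simp only [if_pos h1]
      cases n with
      | zero => simpa [h1] using haa
      | succ k => simpa using y.2 k
    · by_cases h2 : y.1 0 = ν ∧ y.1 1 = a ∧ y.1 2 = a
      · simp only [if_neg h1, if_pos h2]
        cases n with
        | zero => simpa [h2.2.2] using hva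
        | succ k => simpa using y.2 (k + 2)
      · by_cases h3 : y.1 0 = ν ∧ y.1 1 = a
        · simp only [if_neg h1, if_neg h2, if_pos h3]; exact y.2 (n + 1)
        · simp only [if_neg h1, if_neg h2, if_neg h3]; exact y.2 n⟩

variable {A a ν}

lemma insF_coe (haa : A a a = 1) (hva : A ν a = 1) (x : MarkovShift A) (n : ℕ) :
    (insF A a ν haa hva x).1 n = if x.1 0 = a ∧ x.1 1 = a then x.1 (n + 1)
      else if x.1 0 = a then (if n = 0 then ν else x.1 (n - 1))
      else if x.1 0 = ν ∧ x.1 1 = a then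
        (if n = 0 then ν else if n = 1 then a else x.1 (n - 1))
      else x.1 n := rfl

lemma insG_coe (haa : A a a = 1) (hva : A ν a = 1) (y : MarkovShift A) (n : ℕ) :
    (insG A a ν haa hva y).1 n = if y.1 0 = a then (if n = 0 then a else y.1 (n - 1))
      else if y.1 0 = ν ∧ y.1 1 = a ∧ y.1 2 = a then (if n = 0 then ν else y.1 (n + 1))
      else if y.1 0 = ν ∧ y.1 1 = a then y.1 (n + 1)
      else y.1 n := rfl

lemma insGF (haa : A a a = 1) (hva : A ν a = 1) (hne : ν ≠ a) (x : MarkovShift A) :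
    insG A a ν haa hva (insF A a ν haa hva x) = x := by
  apply Subtype.ext; funext n
  by_cases h1 : x.1 0 = a ∧ x.1 1 = a
  · have c0 : (insF A a ν haa hva x).1 0 = a := by
      rw [insF_coe, if_pos h1]; exact h1.2
    rw [insG_coe, if_pos c0]
    cases n with
    | zero => simpa using h1.1.symm
    | succ k => rw [if_neg k.succ_ne_zero, Nat.succ_sub_one, insF_coe, if_pos h1]
  · by_cases h2 : x.1 0 = a
    · have c0 : (insF A a ν haa hva x).1 0 = ν := by
        rw [insF_coe, if_neg h1, if_pos h2]; simp
      have c1 : (insF A a ν haa hva x).1 1 = a := by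
        rw [insF_coe, if_neg h1, if_pos h2]; simpa using h2
      have c2 : (insF A a ν haa hva x).1 2 = x.1 1 := by
        rw [insF_coe, if_neg h1, if_pos h2]; simp
      rw [insG_coe, if_neg (by rw [c0]; exact hne),
        if_neg (by rintro ⟨-, -, hc⟩; rw [c2] at hc; exact h1 ⟨h2, hc⟩),
        if_pos ⟨c0, c1⟩, insF_coe, if_neg h1, if_pos h2,
        if_neg n.succ_ne_zero, Nat.succ_sub_one]
    · by_cases h3 : x.1 0 = ν ∧ x.1 1 = a
      · have c0 : (insF A a ν haa hva x).1 0 = ν := by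
          rw [insF_coe, if_neg h1, if_neg h2, if_pos h3]; simp
        have c1 : (insF A a ν haa hva x).1 1 = a := by
          rw [insF_coe, if_neg h1, if_neg h2, if_pos h3]; simp
        have c2 : (insF A a ν haa hva x).1 2 = a := by
          rw [insF_coe, if_neg h1, if_neg h2, if_pos h3]; simpa using h3.2
        rw [insG_coe, if_neg (by rw [c0]; exact hne), if_pos ⟨c0, c1, c2⟩]
        cases n with
        | zero => simpa using h3.1.symm
        | succ k =>
          rw [if_neg k.succ_ne_zero, insF_coe, if_neg h1, if_neg h2, if_pos h3,
            if_neg (by omega), if_neg (by omega : ¬(k + 1 + 1 = 1))]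
          simp
      · have ceq : ∀ m, (insF A a ν haa hva x).1 m = x.1 m := fun m => by
          rw [insF_coe, if_neg h1, if_neg h2, if_neg h3]
        simp only [insG_coe, ceq]
        rw [if_neg h2, if_neg (by rintro ⟨u, v, -⟩; exact h3 ⟨u, v⟩), if_neg h3]

lemma insFG (haa : A a a = 1) (hva : A ν a = 1) (hne : ν ≠ a) (y : MarkovShift A) :
    insF A a ν haa hva (insG A a ν haa hva y) = y := by
  apply Subtype.ext; funext n
  by_cases h1 : y.1 0 = a
  · have c0 : (insG A a ν haa hva y).1 0 = a := by
      rw [insG_coe, if_pos h1]; simp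
    have c1 : (insG A a ν haa hva y).1 1 = a := by
      rw [insG_coe, if_pos h1]; simpa using h1
    rw [insF_coe, if_pos ⟨c0, c1⟩, insG_coe, if_pos h1,
      if_neg n.succ_ne_zero, Nat.succ_sub_one]
  · by_cases h2 : y.1 0 = ν ∧ y.1 1 = a ∧ y.1 2 = a
    · have c0 : (insG A a ν haa hva y).1 0 = ν := by
        rw [insG_coe, if_neg h1, if_pos h2]; simp
      have c1 : (insG A a ν haa hva y).1 1 = a := by
        rw [insG_coe, if_neg h1, if_pos h2]; simpa using h2.2.2
      rw [insF_coe, if_neg (by rw [c0]; simp [hne]), if_neg (by rw [c0]; exact hne),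
        if_pos ⟨c0, c1⟩]
      match n with
      | 0 => simpa using h2.1.symm
      | 1 => simpa using h2.2.1.symm
      | (j+2) =>
        rw [if_neg (by omega), if_neg (by omega : ¬(j + 2 = 1))]
        have : j + 2 - 1 = j + 1 := rfl
        rw [this, insG_coe, if_neg h1, if_pos h2, if_neg j.succ_ne_zero]
    · by_cases h3 : y.1 0 = ν ∧ y.1 1 = a
      · have c0 : (insG A a ν haa hva y).1 0 = a := by
          rw [insG_coe, if_neg h1, if_neg h2, if_pos h3]; exact h3.2
        have c1 : (insG A a ν haa hva y).1 1 = y.1 2 := by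
          rw [insG_coe, if_neg h1, if_neg h2, if_pos h3]
        rw [insF_coe,
          if_neg (by rintro ⟨-, hc⟩; rw [c1] at hc; exact h2 ⟨h3.1, h3.2, hc⟩),
          if_pos c0]
        cases n with
        | zero => simpa using h3.1.symm
        | succ k =>
          rw [if_neg k.succ_ne_zero, Nat.succ_sub_one, insG_coe, if_neg h1,
            if_neg h2, if_pos h3]
      · have ceq : ∀ m, (insG A a ν haa hva y).1 m = y.1 m := fun m => by
          rw [insG_coe, if_neg h1, if_neg h2, if_neg h3]
        simp only [insF_coe, ceq]
        rw [if_neg (fun hc => h1 hc.1), if_neg h1, if_neg h3]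

end Ins
/-- if `A` and `Aᵀ` satisfy condition (I), then for every admissible word
`μ = (μ₀, μ₁)` of length 2 there are `τ_μ ∈ [σ_A]_c` and continuous orbit cocycles
`k, l` with `σ_A^{k(x)}(τ_μ(x)) = σ_A^{l(x)}(x)` for all `x`, such that on the cylinder
set `U_μ` one has `τ_μ(y) = σ_A(y)`, `k(y) = 0` and `l(y) = 1`. -/
theorem exists_topFullGroup_elt_eq_shift_on_cylinder
    {N : ℕ} (hN : 2 ≤ N) (A : Matrix (Fin N) (Fin N) ℕ)
    (hA : ∀ i j, A i j = 0 ∨ A i j = 1)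
    (hI : ConditionI A) (hIt : ConditionI Aᵀ)
    (μ₀ μ₁ : Fin N) (hadm : ∃ x : MarkovShift A, x.1 0 = μ₀ ∧ x.1 1 = μ₁) :
    ∃ τ ∈ topFullGroup A, ∃ k l : MarkovShift A → ℕ,
      Continuous k ∧ Continuous l ∧
      (∀ x, (mshift A)^[k x] (τ x) = (mshift A)^[l x] x) ∧
      (∀ y : MarkovShift A, y.1 0 = μ₀ → y.1 1 = μ₁ →
        τ y = mshift A y ∧ k y = 0 ∧ l y = 1) := by
  classical
  obtain ⟨x0, hx00, hx01⟩ := hadm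
  have hab : A μ₀ μ₁ = 1 := by have := x0.2 0; rwa [hx00, hx01] at this
  by_cases hmu : μ₀ = μ₁
  · -- case μ₀ = μ₁ : insertion construction
    subst hmu
    obtain ⟨ν, hν, hva⟩ := exists_nu hab hIt
    refine build μ₀ μ₀ (insF A μ₀ ν hab hva) (insG A μ₀ ν hab hva) ?_ ?_
      (insGF hab hva hν) (insFG hab hva hν)
      (fun x => if x.1 0 = μ₀ ∧ x.1 1 = μ₀ then 0 else if x.1 0 = μ₀ then 1
        else if x.1 0 = ν ∧ x.1 1 = μ₀ then 2 else 0)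
      (fun x => if x.1 0 = μ₀ ∧ x.1 1 = μ₀ then 1 else if x.1 0 = μ₀ then 0
        else if x.1 0 = ν ∧ x.1 1 = μ₀ then 1 else 0)
      ?_ ?_ ?_ ?_
    · exact Continuous.subtype_mk (continuous_pi fun n =>
        cont_dep5 0 1 (n - 1) n (n + 1) fun v0 v1 v2 v3 v4 =>
          if v0 = μ₀ ∧ v1 = μ₀ then v4
          else if v0 = μ₀ then (if n = 0 then ν else v2)
          else if v0 = ν ∧ v1 = μ₀ then
            (if n = 0 then ν else if n = 1 then μ₀ else v2)
          else v3) _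
    · exact Continuous.subtype_mk (continuous_pi fun n =>
        cont_dep6 0 1 2 (n - 1) n (n + 1) fun v0 v1 v2 v3 v4 v5 =>
          if v0 = μ₀ then (if n = 0 then μ₀ else v3)
          else if v0 = ν ∧ v1 = μ₀ ∧ v2 = μ₀ then (if n = 0 then ν else v5)
          else if v0 = ν ∧ v1 = μ₀ then v5
          else v4) _
    · exact cont_dep2 0 1 fun v0 v1 =>
        if v0 = μ₀ ∧ v1 = μ₀ then 0 else if v0 = μ₀ then 1
        else if v0 = ν ∧ v1 = μ₀ then 2 else 0
    · exact cont_dep2 0 1 fun v0 v1 =>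
        if v0 = μ₀ ∧ v1 = μ₀ then 1 else if v0 = μ₀ then 0
        else if v0 = ν ∧ v1 = μ₀ then 1 else 0
    · intro x
      apply Subtype.ext; funext n
      beta_reduce
      rw [mshift_iter, mshift_iter]
      by_cases h1 : x.1 0 = μ₀ ∧ x.1 1 = μ₀
      · rw [if_pos h1, if_pos h1, insF_coe, if_pos h1]
      · by_cases h2 : x.1 0 = μ₀
        · rw [if_neg h1, if_pos h2, if_neg h1, if_pos h2, insF_coe, if_neg h1,
            if_pos h2, if_neg n.succ_ne_zero, Nat.succ_sub_one]
          norm_num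
        · by_cases h3 : x.1 0 = ν ∧ x.1 1 = μ₀
          · rw [if_neg h1, if_neg h2, if_pos h3, if_neg h1, if_neg h2, if_pos h3,
              insF_coe, if_neg h1, if_neg h2, if_pos h3,
              if_neg (by omega : ¬(n + 2 = 0)), if_neg (by omega : ¬(n + 2 = 1))]
            norm_num
          · rw [if_neg h1, if_neg h2, if_neg h3, if_neg h1, if_neg h2, if_neg h3,
              insF_coe, if_neg h1, if_neg h2, if_neg h3]
    · intro y h0 h1
      refine ⟨?_, ?_, ?_⟩
      · apply Subtype.ext; funext n
        rw [insF_coe, if_pos ⟨h0, h1⟩]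
        rfl
      · beta_reduce
        rw [if_pos ⟨h0, h1⟩]
      · beta_reduce
        rw [if_pos ⟨h0, h1⟩]
  · -- case μ₀ ≠ μ₁ : swap construction
    refine build μ₀ μ₁ (swapF A μ₀ μ₁ hab) (swapG A μ₀ μ₁ hab) ?_ ?_
      (swapGF hab hmu) (swapFG hab hmu)
      (fun x => if x.1 0 = μ₀ ∧ x.1 1 = μ₁ then 0 else if x.1 0 = μ₁ then 1 else 0)
      (fun x => if x.1 0 = μ₀ ∧ x.1 1 = μ₁ then 1 else 0)
      ?_ ?_ ?_ ?_
    · exact Continuous.subtype_mk (continuous_pi fun n =>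
        cont_dep5 0 1 (n - 1) n (n + 1) fun v0 v1 v2 v3 v4 =>
          if v0 = μ₀ ∧ v1 = μ₁ then v4
          else if v0 = μ₁ then (if n = 0 then μ₀ else v2)
          else v3) _
    · exact Continuous.subtype_mk (continuous_pi fun n =>
        cont_dep5 0 1 (n - 1) n (n + 1) fun v0 v1 v2 v3 v4 =>
          if v0 = μ₁ then (if n = 0 then μ₀ else v2)
          else if v0 = μ₀ ∧ v1 = μ₁ then v4
          else v3) _
    · exact cont_dep2 0 1 fun v0 v1 =>
        if v0 = μ₀ ∧ v1 = μ₁ then 0 else if v0 = μ₁ then 1 else 0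
    · exact cont_dep2 0 1 fun v0 v1 =>
        if v0 = μ₀ ∧ v1 = μ₁ then 1 else 0
    · intro x
      apply Subtype.ext; funext n
      beta_reduce
      rw [mshift_iter, mshift_iter]
      by_cases h1 : x.1 0 = μ₀ ∧ x.1 1 = μ₁
      · rw [if_pos h1, if_pos h1, swapF_coe, if_pos h1]
      · by_cases h2 : x.1 0 = μ₁
        · rw [if_neg h1, if_pos h2, if_neg h1, swapF_coe, if_neg h1, if_pos h2,
            if_neg n.succ_ne_zero, Nat.succ_sub_one]
          norm_num
        · rw [if_neg h1, if_neg h2, if_neg h1, swapF_coe, if_neg h1, if_neg h2]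
    · intro y h0 h1
      refine ⟨?_, ?_, ?_⟩
      · apply Subtype.ext; funext n
        rw [swapF_coe, if_pos ⟨h0, h1⟩]
        rfl
      · beta_reduce
        rw [if_pos ⟨h0, h1⟩]
      · beta_reduce
        rw [if_pos ⟨h0, h1⟩]
end

section
/- For every x = (x_n)_{n∈ℕ} ∈ X_A and every j ∈ {1,…,N} such that jx = (j, x_1, x_2, …) ∈ X_A, there exists τ ∈ [σ_A]_c with τ(x) = jx. -/
open Matrix

/-- The point `jx = (j, x₁, x₂, …) ∈ X_A`, defined when `A(j, x₁) = 1`. -/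
def mcons {N : ℕ} (A : Matrix (Fin N) (Fin N) ℕ) (j : Fin N) (x : MarkovShift A)
    (h : A j (x.1 0) = 1) : MarkovShift A :=
  ⟨fun n => Nat.casesOn n j fun m => x.1 m, by
    intro n
    cases n with
    | zero => exact h
    | succ m => exact x.2 m⟩

/-- for every `x ∈ X_A` and every `j` with `jx = (j, x₁, x₂, …) ∈ X_A`,
there exists `τ ∈ [σ_A]_c` with `τ(x) = jx`. -/
theorem exists_topFullGroup_elt_apply_eq_cons
    {N : ℕ} (hN : 2 ≤ N) (A : Matrix (Fin N) (Fin N) ℕ)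
    (hA : ∀ i j, A i j = 0 ∨ A i j = 1)
    (x : MarkovShift A) (j : Fin N) (hj : A j (x.1 0) = 1) :
    ∃ τ ∈ topFullGroup A, τ x = mcons A j x hj := by
  classical
  by_cases hall : ∀ n, x.1 n = j
  · -- x is the constant sequence j, so jx = x and the identity works
    refine ⟨Homeomorph.refl _, ⟨fun y => ⟨0, 0, rfl⟩,
      fun _ => 0, fun _ => 0, continuous_const, continuous_const, fun y => rfl⟩, ?_⟩
    apply Subtype.ext
    funext n
    cases n with
    | zero => exact (hall 0).trans rfl
    | succ m => exact (hall (m + 1)).trans (hall m).symm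
  · push_neg at hall
    set m := Nat.find hall with hm_def
    have hm : x.1 m ≠ j := Nat.find_spec hall
    have hmin : ∀ i < m, x.1 i = j := fun i hi => not_not.mp (Nat.find_min hall hi)
    -- cylinders
    set U : Set (MarkovShift A) := {y | ∀ i ≤ m, y.1 i = x.1 i} with hU_def
    set V : Set (MarkovShift A) := {y | y.1 0 = j ∧ ∀ i ≤ m, y.1 (i + 1) = x.1 i} with hV_def
    -- disjointness
    have hVnotU : ∀ y ∈ V, y ∉ U := by
      intro y hV hU
      apply hm
      have h1 : y.1 m = x.1 m := hU m le_rfl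
      have h2 : y.1 m = j := by
        rcases Nat.eq_zero_or_pos m with h0 | hpos
        · rw [h0]; exact hV.1
        · have h3 : y.1 (m - 1 + 1) = x.1 (m - 1) := hV.2 (m - 1) (Nat.sub_le m 1)
          rw [Nat.sub_add_cancel hpos] at h3
          rw [h3]
          exact hmin (m - 1) (Nat.sub_lt hpos Nat.one_pos)
      rw [← h1, h2]
    have hUnotV : ∀ y ∈ U, y ∉ V := fun y hU hV => hVnotU y hV hU
    -- clopenness
    have hcoord : ∀ (k : ℕ) (i : Fin N), IsClopen {y : MarkovShift A | y.1 k = i} :=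
      fun k i => (isClopen_discrete {i}).preimage
        ((continuous_apply k).comp continuous_subtype_val)
    have hUc : IsClopen U := by
      have : U = ⋂ i ∈ Finset.range (m + 1), {y : MarkovShift A | y.1 i = x.1 i} := by
        ext y
        simp [hU_def, Nat.lt_succ_iff]
      rw [this]
      exact isClopen_biInter_finset fun i _ => hcoord i (x.1 i)
    have hVc : IsClopen V := by
      have : V = {y : MarkovShift A | y.1 0 = j} ∩
          ⋂ i ∈ Finset.range (m + 1), {y : MarkovShift A | y.1 (i + 1) = x.1 i} := by
        ext y
        simp [hV_def, Nat.lt_succ_iff]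
      rw [this]
      exact (hcoord 0 j).inter (isClopen_biInter_finset fun i _ => hcoord (i + 1) (x.1 i))
    -- underlying maps
    set g1 : MarkovShift A → (ℕ → Fin N) :=
      fun y n => Nat.casesOn n j fun k => y.1 k with hg1_def
    set g2 : MarkovShift A → (ℕ → Fin N) := fun y n => y.1 (n + 1) with hg2_def
    set F : MarkovShift A → (ℕ → Fin N) :=
      U.piecewise g1 (V.piecewise g2 Subtype.val) with hF_def
    have hFU : ∀ y ∈ U, F y = g1 y := fun y hy => Set.piecewise_eq_of_mem _ _ _ hy
    have hFV : ∀ y, y ∉ U → y ∈ V → F y = g2 y := by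
      intro y hyU hyV
      rw [hF_def]
      rw [Set.piecewise_eq_of_notMem _ _ _ hyU, Set.piecewise_eq_of_mem _ _ _ hyV]
    have hFE : ∀ y, y ∉ U → y ∉ V → F y = y.1 := by
      intro y hyU hyV
      rw [hF_def]
      rw [Set.piecewise_eq_of_notMem _ _ _ hyU, Set.piecewise_eq_of_notMem _ _ _ hyV]
    -- F y is admissible
    have hFadm : ∀ y, ∀ n, A (F y n) (F y (n + 1)) = 1 := by
      intro y n
      by_cases hyU : y ∈ U
      · rw [hFU y hyU]
        cases n with
        | zero =>
          show A j (y.1 0) = 1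
          rw [hyU 0 (Nat.zero_le m)]
          exact hj
        | succ k => exact y.2 k
      · by_cases hyV : y ∈ V
        · rw [hFV y hyU hyV]
          exact y.2 (n + 1)
        · rw [hFE y hyU hyV]
          exact y.2 n
    set f : MarkovShift A → MarkovShift A := fun y => ⟨F y, hFadm y⟩ with hf_def
    -- membership propagation
    have hUtoV : ∀ y ∈ U, f y ∈ V := by
      intro y hy
      refine ⟨?_, ?_⟩
      · show F y 0 = j
        rw [hFU y hy]
        rfl
      · intro i hi
        show F y (i + 1) = x.1 i
        rw [hFU y hy]
        exact hy i hi
    have hVtoU : ∀ y, y ∉ U → y ∈ V → f y ∈ U := by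
      intro y hyU hyV i hi
      show F y i = x.1 i
      rw [hFV y hyU hyV]
      exact hyV.2 i hi
    -- key computations
    have hshift_f : ∀ y ∈ U, mshift A (f y) = y := by
      intro y hy
      apply Subtype.ext
      funext n
      show F y (n + 1) = y.1 n
      rw [hFU y hy]
    have hf_shift : ∀ y, y ∉ U → y ∈ V → f y = mshift A y := by
      intro y hyU hyV
      apply Subtype.ext
      exact hFV y hyU hyV
    have hf_id : ∀ y, y ∉ U → y ∉ V → f y = y := by
      intro y hyU hyV
      apply Subtype.ext
      exact hFE y hyU hyV
    -- involution
    have hinv : ∀ y, f (f y) = y := by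
      intro y
      by_cases hyU : y ∈ U
      · have h1 : f y ∈ V := hUtoV y hyU
        have h2 : f y ∉ U := hVnotU _ h1
        rw [hf_shift (f y) h2 h1]
        exact hshift_f y hyU
      · by_cases hyV : y ∈ V
        · have h1 : f y ∈ U := hVtoU y hyU hyV
          apply Subtype.ext
          funext n
          have := hFU (f y) h1
          show F (f y) n = y.1 n
          rw [this]
          cases n with
          | zero => exact hyV.1.symm
          | succ k =>
            show F y k = y.1 (k + 1)
            rw [hFV y hyU hyV]
        · rw [hf_id y hyU hyV, hf_id y hyU hyV]
    -- continuity
    have hg1c : Continuous g1 := by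
      apply continuous_pi
      intro n
      cases n with
      | zero => exact continuous_const
      | succ k => exact (continuous_apply k).comp continuous_subtype_val
    have hg2c : Continuous g2 :=
      continuous_pi fun n => (continuous_apply (n + 1)).comp continuous_subtype_val
    have hFc : Continuous F := by
      apply Continuous.piecewise
      · rw [hUc.frontier_eq]
        intro a ha
        exact absurd ha (Set.notMem_empty a)
      · exact hg1c
      · apply Continuous.piecewise
        · rw [hVc.frontier_eq]
          intro a ha
          exact absurd ha (Set.notMem_empty a)
        · exact hg2c
        · exact continuous_subtype_val
    have hfc : Continuous f := hFc.subtype_mk _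
    -- the homeomorphism
    set τ : MarkovShift A ≃ₜ MarkovShift A :=
      { toFun := f, invFun := f, left_inv := hinv, right_inv := hinv,
        continuous_toFun := hfc, continuous_invFun := hfc } with hτ_def
    -- cocycles
    set kk : MarkovShift A → ℕ := fun y => if y ∈ U then 1 else 0 with hkk_def
    set ll : MarkovShift A → ℕ := fun y => if y ∈ V then 1 else 0 with hll_def
    have hkkc : Continuous kk := by
      have : kk = U.piecewise (fun _ => 1) (fun _ => 0) := rfl
      rw [this]
      apply Continuous.piecewise
      · rw [hUc.frontier_eq]
        intro a ha
        exact absurd ha (Set.notMem_empty a)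
      · exact continuous_const
      · exact continuous_const
    have hllc : Continuous ll := by
      have : ll = V.piecewise (fun _ => 1) (fun _ => 0) := rfl
      rw [this]
      apply Continuous.piecewise
      · rw [hVc.frontier_eq]
        intro a ha
        exact absurd ha (Set.notMem_empty a)
      · exact continuous_const
      · exact continuous_const
    have hcocycle : ∀ y, (mshift A)^[kk y] (τ y) = (mshift A)^[ll y] y := by
      intro y
      by_cases hyU : y ∈ U
      · have hyV : y ∉ V := hUnotV y hyU
        simp only [hkk_def, hll_def, if_pos hyU, if_neg hyV,
          Function.iterate_one, Function.iterate_zero, id_eq]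
        exact hshift_f y hyU
      · by_cases hyV : y ∈ V
        · simp only [hkk_def, hll_def, if_neg hyU, if_pos hyV,
            Function.iterate_one, Function.iterate_zero, id_eq]
          exact hf_shift y hyU hyV
        · simp only [hkk_def, hll_def, if_neg hyU, if_neg hyV,
            Function.iterate_zero, id_eq]
          exact hf_id y hyU hyV
    refine ⟨τ, ⟨fun y => ⟨kk y, ll y, hcocycle y⟩, kk, ll, hkkc, hllc, hcocycle⟩, ?_⟩
    -- τ x = jx
    have hxU : x ∈ U := fun i _ => rfl
    apply Subtype.ext
    show F x = (mcons A j x hj).1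
    rw [hFU x hxU]
    rfl
end

section
/- Assume that both A and its transpose A^t satisfy Cuntz–Krieger condition (I). Then for every x ∈ X_A the orbit of x under the topological full group equals the orbit of x under the shift: { τ(x) : τ ∈ [σ_A]_c } = orb_{σ_A}(x). -/
open Matrix

lemma mshift_iterate_apply {N : ℕ} (A : Matrix (Fin N) (Fin N) ℕ)
    (p : ℕ) (w : MarkovShift A) (i : ℕ) :
    ((mshift A)^[p] w).1 i = w.1 (i + p) := by
  induction p generalizing w i with
  | zero => rfl
  | succ p ih =>
      rw [Function.iterate_succ_apply, ih]
      simp [mshift, Nat.add_assoc]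

lemma isClopen_cyl {N : ℕ} (A : Matrix (Fin N) (Fin N) ℕ) (M : ℕ) (c : ℕ → Fin N) :
    IsClopen {w : MarkovShift A | ∀ i < M, w.1 i = c i} := by
  have he : {w : MarkovShift A | ∀ i < M, w.1 i = c i}
      = ⋂ i ∈ Finset.range M, {w : MarkovShift A | w.1 i = c i} := by
    ext w; simp [Finset.mem_range]
  rw [he]
  refine isClopen_biInter_finset fun i _ => ?_
  have hc : Continuous fun w : MarkovShift A => w.1 i :=
    (continuous_apply i).comp continuous_subtype_val
  exact (isClopen_discrete {c i}).preimage hc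

lemma exists_tau {N : ℕ} (A : Matrix (Fin N) (Fin N) ℕ)
    (x y : MarkovShift A) (k l : ℕ)
    (h : (mshift A)^[k] y = (mshift A)^[l] x) :
    ∃ τ ∈ topFullGroup A, τ x = y := by
  classical
  by_cases hxy : x = y
  · refine ⟨Homeomorph.refl _, ⟨fun w => ⟨0, 0, rfl⟩,
      fun _ => 0, fun _ => 0, continuous_const, continuous_const, fun w => rfl⟩, hxy⟩
  -- key coordinate identity
  have key : ∀ i, y.1 (i + k) = x.1 (i + l) := by
    intro i
    have := congrArg (fun w : MarkovShift A => w.1 i) h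
    simpa [mshift_iterate_apply] using this
  obtain ⟨n, hn⟩ : ∃ n, x.1 n ≠ y.1 n := by
    by_contra hc
    push_neg at hc
    exact hxy (Subtype.ext (funext hc))
  set m := n + 1 with hm
  set U : Set (MarkovShift A) := {w | ∀ i < l + m, w.1 i = x.1 i} with hU
  set V : Set (MarkovShift A) := {w | ∀ i < k + m, w.1 i = y.1 i} with hV
  have hUc : IsClopen U := isClopen_cyl A (l + m) x.1
  have hVc : IsClopen V := isClopen_cyl A (k + m) y.1
  have disj : ∀ w, w ∈ U → w ∈ V → False := by
    intro w hwU hwV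
    exact hn ((hwU n (by omega)).symm.trans (hwV n (by omega)))
  -- the raw map
  set F : MarkovShift A → ℕ → Fin N := fun w i =>
    if w ∈ U then (if i < k then y.1 i else w.1 (i - k + l))
    else if w ∈ V then (if i < l then x.1 i else w.1 (i - l + k))
    else w.1 i with hF
  have hmemF : ∀ w : MarkovShift A, ∀ j, A (F w j) (F w (j + 1)) = 1 := by
    intro w j
    simp only [hF]
    by_cases hwU : w ∈ U
    · simp only [if_pos hwU]
      rcases lt_trichotomy (j + 1) k with h1 | h1 | h1
      · rw [if_pos (by omega), if_pos h1]; exact y.2 j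
      · rw [if_pos (by omega), if_neg (by omega)]
        have e1 : j + 1 - k + l = l := by omega
        rw [e1, hwU l (by omega)]
        have e2 : x.1 l = y.1 (j + 1) := by
          have := key 0; simpa [h1] using this.symm
        rw [e2]; exact y.2 j
      · rw [if_neg (by omega), if_neg (by omega)]
        have e1 : j + 1 - k + l = (j - k + l) + 1 := by omega
        rw [e1]; exact w.2 _
    · simp only [if_neg hwU]
      by_cases hwV : w ∈ V
      · simp only [if_pos hwV]
        rcases lt_trichotomy (j + 1) l with h1 | h1 | h1
        · rw [if_pos (by omega), if_pos h1]; exact x.2 j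
        · rw [if_pos (by omega), if_neg (by omega)]
          have e1 : j + 1 - l + k = k := by omega
          rw [e1, hwV k (by omega)]
          have e2 : y.1 k = x.1 (j + 1) := by
            have := key 0; simpa [h1] using this
          rw [e2]; exact x.2 j
        · rw [if_neg (by omega), if_neg (by omega)]
          have e1 : j + 1 - l + k = (j - l + k) + 1 := by omega
          rw [e1]; exact w.2 _
      · simp only [if_neg hwV]; exact w.2 j
  set f : MarkovShift A → MarkovShift A := fun w => ⟨F w, hmemF w⟩ with hf
  -- f maps U into V and V into U
  have hUV : ∀ w, w ∈ U → f w ∈ V := by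
    intro w hwU i hi
    show F w i = y.1 i
    simp only [hF, if_pos hwU]
    by_cases h1 : i < k
    · rw [if_pos h1]
    · rw [if_neg h1]
      rw [hwU (i - k + l) (by omega)]
      have hk := key (i - k)
      have e : i - k + k = i := by omega
      rw [e] at hk; exact hk.symm
  have hVU : ∀ w, w ∈ V → f w ∈ U := by
    intro w hwV i hi
    show F w i = x.1 i
    simp only [hF, if_neg (fun hwU => disj w hwU hwV), if_pos hwV]
    by_cases h1 : i < l
    · rw [if_pos h1]
    · rw [if_neg h1]
      rw [hwV (i - l + k) (by omega)]
      have := key (i - l)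
      have e : i - l + l = i := by omega
      rw [e] at this; exact this
  have hfix : ∀ w, w ∉ U → w ∉ V → f w = w := by
    intro w hwU hwV
    apply Subtype.ext; funext i
    show F w i = w.1 i
    simp only [hF, if_neg hwU, if_neg hwV]
  have hinv : ∀ w, f (f w) = w := by
    intro w
    by_cases hwU : w ∈ U
    · have h1 : f w ∈ V := hUV w hwU
      have h2 : f w ∉ U := fun h => disj _ h h1
      apply Subtype.ext; funext i
      show F (f w) i = w.1 i
      simp only [hF, if_neg h2, if_pos h1]
      by_cases h3 : i < l
      · rw [if_pos h3]; exact (hwU i (by omega)).symm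
      · rw [if_neg h3]
        show F w (i - l + k) = w.1 i
        simp only [hF, if_pos hwU]
        rw [if_neg (by omega)]
        have e : i - l + k - k + l = i := by omega
        rw [e]
    · by_cases hwV : w ∈ V
      · have h1 : f w ∈ U := hVU w hwV
        apply Subtype.ext; funext i
        show F (f w) i = w.1 i
        simp only [hF, if_pos h1]
        by_cases h3 : i < k
        · rw [if_pos h3]; exact (hwV i (by omega)).symm
        · rw [if_neg h3]
          show F w (i - k + l) = w.1 i
          simp only [hF, if_neg hwU, if_pos hwV]
          rw [if_neg (by omega)]
          have e : i - k + l - l + k = i := by omega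
          rw [e]
      · rw [hfix w hwU hwV, hfix w hwU hwV]
  -- continuity
  have hcF : Continuous f := by
    apply Continuous.subtype_mk
    apply continuous_pi
    intro i
    show Continuous fun w => F w i
    simp only [hF]
    apply Continuous.if
    · intro a ha; rw [Set.setOf_mem_eq, hUc.frontier_eq] at ha; exact absurd ha (Set.notMem_empty a)
    · by_cases h1 : i < k
      · simp only [if_pos h1]; exact continuous_const
      · simp only [if_neg h1]
        exact (continuous_apply _).comp continuous_subtype_val
    · apply Continuous.if
      · intro a ha; rw [Set.setOf_mem_eq, hVc.frontier_eq] at ha; exact absurd ha (Set.notMem_empty a)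
      · by_cases h1 : i < l
        · simp only [if_pos h1]; exact continuous_const
        · simp only [if_neg h1]
          exact (continuous_apply _).comp continuous_subtype_val
      · exact (continuous_apply _).comp continuous_subtype_val
  set τ : MarkovShift A ≃ₜ MarkovShift A :=
    ⟨⟨f, f, hinv, hinv⟩, hcF, hcF⟩ with hτ
  -- cocycle
  set kk : MarkovShift A → ℕ := fun w => if w ∈ U then k else if w ∈ V then l else 0 with hkk
  set ll : MarkovShift A → ℕ := fun w => if w ∈ U then l else if w ∈ V then k else 0 with hll
  have hckk : Continuous kk := by
    apply Continuous.if
    · intro a ha; rw [Set.setOf_mem_eq, hUc.frontier_eq] at ha; exact absurd ha (Set.notMem_empty a)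
    · exact continuous_const
    · apply Continuous.if
      · intro a ha; rw [Set.setOf_mem_eq, hVc.frontier_eq] at ha; exact absurd ha (Set.notMem_empty a)
      · exact continuous_const
      · exact continuous_const
  have hcll : Continuous ll := by
    apply Continuous.if
    · intro a ha; rw [Set.setOf_mem_eq, hUc.frontier_eq] at ha; exact absurd ha (Set.notMem_empty a)
    · exact continuous_const
    · apply Continuous.if
      · intro a ha; rw [Set.setOf_mem_eq, hVc.frontier_eq] at ha; exact absurd ha (Set.notMem_empty a)
      · exact continuous_const
      · exact continuous_const
  have hcoc : ∀ w, (mshift A)^[kk w] (τ w) = (mshift A)^[ll w] w := by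
    intro w
    by_cases hwU : w ∈ U
    · simp only [hkk, hll, if_pos hwU]
      apply Subtype.ext; funext i
      rw [mshift_iterate_apply, mshift_iterate_apply]
      show F w (i + k) = w.1 (i + l)
      simp only [hF, if_pos hwU]
      rw [if_neg (by omega)]
      have e : i + k - k + l = i + l := by omega
      rw [e]
    · by_cases hwV : w ∈ V
      · simp only [hkk, hll, if_neg hwU, if_pos hwV]
        apply Subtype.ext; funext i
        rw [mshift_iterate_apply, mshift_iterate_apply]
        show F w (i + l) = w.1 (i + k)
        simp only [hF, if_neg hwU, if_pos hwV]
        rw [if_neg (by omega)]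
        have e : i + l - l + k = i + k := by omega
        rw [e]
      · simp only [hkk, hll, if_neg hwU, if_neg hwV]
        show f w = w
        exact hfix w hwU hwV
  have hfx : f x = y := by
    have hxU : x ∈ U := fun i _ => rfl
    apply Subtype.ext; funext i
    show F x i = y.1 i
    simp only [hF, if_pos hxU]
    by_cases h1 : i < k
    · rw [if_pos h1]
    · rw [if_neg h1]
      have hk := key (i - k)
      have e : i - k + k = i := by omega
      rw [e] at hk
      exact hk.symm
  exact ⟨τ, ⟨fun w => ⟨kk w, ll w, hcoc w⟩, kk, ll, hckk, hcll, hcoc⟩, hfx⟩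

/-- if `A` and `Aᵀ` satisfy condition (I), then for every `x ∈ X_A` the
orbit of `x` under the topological full group equals the `σ_A`-orbit of `x`:
`{ τ(x) : τ ∈ [σ_A]_c } = orb_{σ_A}(x)`. -/
theorem topFullGroup_orbit_eq_orb
    {N : ℕ} (hN : 2 ≤ N) (A : Matrix (Fin N) (Fin N) ℕ)
    (hA : ∀ i j, A i j = 0 ∨ A i j = 1)
    (hI : ConditionI A) (hIt : ConditionI Aᵀ) :
    ∀ x : MarkovShift A,
      { y : MarkovShift A | ∃ τ ∈ topFullGroup A, τ x = y } = orb A x := by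
  intro x
  ext y
  constructor
  · rintro ⟨τ, ⟨hfull, kf, lf, hck, hcl, hcoc⟩, rfl⟩
    exact ⟨kf x, lf x, hcoc x⟩
  · rintro ⟨k, l, h⟩
    exact exists_tau A x y k l h
end

section
/- Assume A satisfies Cuntz–Krieger condition (I). For every τ ∈ [σ_A]_c, the unitary u_τ on ℓ²(X_A) defined by u_τ e_x = e_{τ(x)} (x ∈ X_A) belongs to O_A and satisfies u_τ M_f u_τ^* = M_{f ∘ τ^{-1}} for all f ∈ C(X_A,ℂ); in particular u_τ D_A u_τ^* = D_A, so u_τ lies in the normalizer N(O_A, D_A). Moreover the map τ ↦ u_τ from [σ_A]_c to the unitary group of O_A is a group homomorphism. -/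
open Matrix

noncomputable section

/-- The Hilbert space `ℓ²(X_A)` with orthonormal basis indexed by points of `X_A`. -/
abbrev MSHilbert {N : ℕ} (A : Matrix (Fin N) (Fin N) ℕ) : Type :=
  lp (fun _ : MarkovShift A => ℂ) 2

/-- The standard orthonormal basis vector `e_x` of `ℓ²(X_A)`. -/
def basisVec {N : ℕ} (A : Matrix (Fin N) (Fin N) ℕ) (x : MarkovShift A) :
    MSHilbert A :=
  letI : DecidableEq (MarkovShift A) := Classical.decEq _
  lp.single 2 x 1

/-- `T` acts on the basis by `T e_x = e_{ix}` if `ix ∈ X_A`, and `T e_x = 0` otherwise;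
this is the defining property of the canonical generating partial isometry `T_i`. -/
def IsShiftOp {N : ℕ} (A : Matrix (Fin N) (Fin N) ℕ) (i : Fin N)
    (T : MSHilbert A →L[ℂ] MSHilbert A) : Prop :=
  ∀ x : MarkovShift A,
    (∀ h : A i (x.1 0) = 1, T (basisVec A x) = basisVec A (mcons A i x h)) ∧
    (¬ A i (x.1 0) = 1 → T (basisVec A x) = 0)

/-- `T` is the family `T_1, …, T_N` of canonical generating partial isometries. -/
def IsGenFamily {N : ℕ} (A : Matrix (Fin N) (Fin N) ℕ)
    (T : Fin N → (MSHilbert A →L[ℂ] MSHilbert A)) : Prop :=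
  ∀ i, IsShiftOp A i (T i)

/-- `M` assigns to every `f ∈ C(X_A, ℂ)` the multiplication operator `M_f`,
characterized by `M_f e_x = f(x) • e_x`. -/
def IsMultOp {N : ℕ} (A : Matrix (Fin N) (Fin N) ℕ)
    (M : C(MarkovShift A, ℂ) → (MSHilbert A →L[ℂ] MSHilbert A)) : Prop :=
  ∀ (f : C(MarkovShift A, ℂ)) (x : MarkovShift A),
    M f (basisVec A x) = f x • basisVec A x

/-- The Cuntz–Krieger algebra `O_A`: the norm closure of the ∗-subalgebra of
`B(ℓ²(X_A))` generated by `T_1, …, T_N`. -/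
def CKalg {N : ℕ} (A : Matrix (Fin N) (Fin N) ℕ)
    (T : Fin N → (MSHilbert A →L[ℂ] MSHilbert A)) :
    StarSubalgebra ℂ (MSHilbert A →L[ℂ] MSHilbert A) :=
  (StarAlgebra.adjoin ℂ (Set.range T)).topologicalClosure

namespace CK6

variable {N : ℕ} {A : Matrix (Fin N) (Fin N) ℕ}

lemma coord_self (x : MarkovShift A) : (basisVec A x : ∀ _, ℂ) x = 1 := by
  letI : DecidableEq (MarkovShift A) := Classical.decEq _
  exact lp.single_apply_self 2 x 1

lemma coord_ne {x y : MarkovShift A} (h : y ≠ x) : (basisVec A x : ∀ _, ℂ) y = 0 := by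
  letI : DecidableEq (MarkovShift A) := Classical.decEq _
  exact lp.single_apply_ne 2 x 1 h

lemma inner_basis (x : MarkovShift A) (f : MSHilbert A) :
    (inner ℂ (basisVec A x) f : ℂ) = f x := by
  letI : DecidableEq (MarkovShift A) := Classical.decEq _
  have := lp.inner_single_left (𝕜 := ℂ) (G := fun _ : MarkovShift A => ℂ) x (1 : ℂ) f
  exact (by simpa [RCLike.inner_apply] using this : inner ℂ (lp.single 2 x (1 : ℂ)) f = f x)

lemma vec_ext {v w : MSHilbert A}
    (h : ∀ y, (inner ℂ (basisVec A y) v : ℂ) = inner ℂ (basisVec A y) w) : v = w := by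
  apply lp.ext; funext y
  have := h y
  rwa [inner_basis, inner_basis] at this

lemma inner_basis_basis_self (x : MarkovShift A) :
    (inner ℂ (basisVec A x) (basisVec A x) : ℂ) = 1 := by
  rw [inner_basis]; exact coord_self x

lemma inner_basis_basis_ne {x y : MarkovShift A} (h : x ≠ y) :
    (inner ℂ (basisVec A x) (basisVec A y) : ℂ) = 0 := by
  rw [inner_basis]; exact coord_ne h

lemma clm_ext_basis {S R : MSHilbert A →L[ℂ] MSHilbert A}
    (h : ∀ x, S (basisVec A x) = R (basisVec A x)) : S = R := by
  letI : DecidableEq (MarkovShift A) := Classical.decEq _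
  refine ContinuousLinearMap.ext fun f => ?_
  have h1 : HasSum (fun x => lp.single 2 x (f x)) f :=
    lp.hasSum_single (by norm_num) f
  have hsingle : ∀ x : MarkovShift A, lp.single 2 x (f x) = f x • basisVec A x := by
    intro x
    have := lp.single_smul (E := fun _ : MarkovShift A => ℂ) 2 x (f x) (1 : ℂ)
    simp only [smul_eq_mul, mul_one] at this
    exact this.symm ▸ rfl
  have h2 : HasSum (fun x => S (lp.single 2 x (f x))) (S f) := h1.mapL S
  have h3 : HasSum (fun x => R (lp.single 2 x (f x))) (R f) := h1.mapL R
  have : (fun x => S (lp.single 2 x (f x))) = fun x => R (lp.single 2 x (f x)) := by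
    funext x
    rw [hsingle, S.map_smul, R.map_smul, h x]
  rw [this] at h2
  exact h2.unique h3

lemma inner_star_basis (S : MSHilbert A →L[ℂ] MSHilbert A) (y z : MarkovShift A) :
    (inner ℂ (basisVec A y) ((star S) (basisVec A z)) : ℂ)
      = inner ℂ (S (basisVec A y)) (basisVec A z) := by
  rw [ContinuousLinearMap.star_eq_adjoint, ContinuousLinearMap.adjoint_inner_right]

end CK6

namespace CK6

variable {N : ℕ} {A : Matrix (Fin N) (Fin N) ℕ}

lemma iter_coord (k : ℕ) (x : MarkovShift A) (n : ℕ) :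
    ((mshift A)^[k] x).1 n = x.1 (n + k) := by
  induction k generalizing x n with
  | zero => rfl
  | succ m ih =>
    rw [Function.iterate_succ_apply, ih]
    show x.1 (n + m + 1) = x.1 (n + (m + 1))
    congr 1

def app : List (Fin N) → (ℕ → Fin N) → ℕ → Fin N
  | [], s => s
  | i :: w, s => fun j => Nat.casesOn j i fun m => app w s m

lemma app_nil (s : ℕ → Fin N) : app ([] : List (Fin N)) s = s := rfl

lemma app_lt (w : List (Fin N)) (s : ℕ → Fin N) {j : ℕ} (h : j < w.length) :
    app w s j = w.get ⟨j, h⟩ := by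
  induction w generalizing j with
  | nil => exact absurd h (by simp)
  | cons i w ih =>
    cases j with
    | zero => rfl
    | succ m => exact ih (Nat.lt_of_succ_lt_succ h)

lemma app_ge (w : List (Fin N)) (s : ℕ → Fin N) {j : ℕ} (h : w.length ≤ j) :
    app w s j = s (j - w.length) := by
  induction w generalizing j with
  | nil => rfl
  | cons i w ih =>
    cases j with
    | zero => exact absurd h (by simp)
    | succ m =>
      show app w s m = _
      rw [ih (Nat.le_of_succ_le_succ h)]
      congr 1
      simp

def Tprod (T : Fin N → (MSHilbert A →L[ℂ] MSHilbert A)) :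
    List (Fin N) → (MSHilbert A →L[ℂ] MSHilbert A)
  | [] => 1
  | i :: w => T i * Tprod T w

lemma Tprod_mem (T : Fin N → (MSHilbert A →L[ℂ] MSHilbert A)) (w : List (Fin N)) :
    Tprod T w ∈ StarAlgebra.adjoin ℂ (Set.range T) := by
  induction w with
  | nil => exact one_mem _
  | cons i w ih =>
    exact mul_mem (StarAlgebra.subset_adjoin ℂ _ (Set.mem_range_self i)) ih

lemma Tprod_apply_pos (T : Fin N → (MSHilbert A →L[ℂ] MSHilbert A))
    (hT : IsGenFamily A T) (w : List (Fin N)) (x y : MarkovShift A)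
    (h : y.1 = app w x.1) : Tprod T w (basisVec A x) = basisVec A y := by
  induction w generalizing y with
  | nil =>
    have : y = x := Subtype.ext h
    rw [this]
    exact ContinuousLinearMap.one_apply _
  | cons i w ih =>
    have hy' : (mshift A y).1 = app w x.1 := by
      funext m
      show y.1 (m + 1) = app w x.1 m
      rw [h]
      rfl
    have h0 : y.1 0 = i := by rw [h]; rfl
    have hA0 : A i ((mshift A y).1 0) = 1 := by
      have h2 := y.2 0
      rwa [h0] at h2
    show T i (Tprod T w (basisVec A x)) = basisVec A y
    rw [ih (mshift A y) hy', (hT i (mshift A y)).1 hA0]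
    congr 1
    apply Subtype.ext
    funext n
    cases n with
    | zero => exact h0.symm
    | succ m => rfl

lemma Tprod_apply_neg (T : Fin N → (MSHilbert A →L[ℂ] MSHilbert A))
    (hT : IsGenFamily A T) (w : List (Fin N)) (x : MarkovShift A)
    (h : ∀ y : MarkovShift A, y.1 ≠ app w x.1) :
    Tprod T w (basisVec A x) = 0 := by
  induction w with
  | nil => exact absurd rfl (h x)
  | cons i w ih =>
    show T i (Tprod T w (basisVec A x)) = 0
    by_cases h' : ∃ y' : MarkovShift A, y'.1 = app w x.1
    · obtain ⟨y', hy'⟩ := h'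
      rw [Tprod_apply_pos T hT w x y' hy']
      by_cases hA0 : A i (y'.1 0) = 1
      · exfalso
        apply h (mcons A i y' hA0)
        funext n
        cases n with
        | zero => rfl
        | succ m =>
          show y'.1 m = app w x.1 m
          exact congrFun hy' m
      · exact (hT i y').2 hA0
    · push_neg at h'
      rw [ih h', map_zero]

lemma mshift_mcons (i : Fin N) (y : MarkovShift A) (hA : A i (y.1 0) = 1) :
    mshift A (mcons A i y hA) = y := by
  apply Subtype.ext
  funext m
  rfl

lemma starT_pos (T : Fin N → (MSHilbert A →L[ℂ] MSHilbert A))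
    (hT : IsGenFamily A T) (i : Fin N) (z : MarkovShift A) (h : z.1 0 = i) :
    star (T i) (basisVec A z) = basisVec A (mshift A z) := by
  apply vec_ext
  intro y
  rw [inner_star_basis]
  by_cases hy : y = mshift A z
  · subst hy
    have hA : A i ((mshift A z).1 0) = 1 := by
      have h2 := z.2 0
      rwa [h] at h2
    rw [(hT i (mshift A z)).1 hA]
    have : mcons A i (mshift A z) hA = z := by
      apply Subtype.ext
      funext n
      cases n with
      | zero => exact h.symm
      | succ m => rfl
    rw [this, inner_basis_basis_self, inner_basis_basis_self]
  · rw [inner_basis_basis_ne (fun hc => hy hc)]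
    by_cases hA : A i (y.1 0) = 1
    · rw [(hT i y).1 hA]
      refine inner_basis_basis_ne (fun hc => hy ?_)
      rw [← hc, mshift_mcons]
    · rw [(hT i y).2 hA, inner_zero_left]

lemma starT_neg (T : Fin N → (MSHilbert A →L[ℂ] MSHilbert A))
    (hT : IsGenFamily A T) (i : Fin N) (z : MarkovShift A) (h : z.1 0 ≠ i) :
    star (T i) (basisVec A z) = 0 := by
  apply vec_ext
  intro y
  rw [inner_star_basis, inner_zero_right]
  by_cases hA : A i (y.1 0) = 1
  · rw [(hT i y).1 hA]
    refine inner_basis_basis_ne (fun hc => h ?_)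
    rw [← hc]
    rfl
  · rw [(hT i y).2 hA, inner_zero_left]

lemma star_Tprod_cons (T : Fin N → (MSHilbert A →L[ℂ] MSHilbert A)) (i : Fin N)
    (w : List (Fin N)) : star (Tprod T (i :: w)) = star (Tprod T w) * star (T i) := by
  show star (T i * Tprod T w) = _
  rw [StarMul.star_mul]

lemma starTprod_pos (T : Fin N → (MSHilbert A →L[ℂ] MSHilbert A))
    (hT : IsGenFamily A T) (w : List (Fin N)) (z : MarkovShift A)
    (h : ∀ j (hj : j < w.length), z.1 j = w.get ⟨j, hj⟩) :
    star (Tprod T w) (basisVec A z) = basisVec A ((mshift A)^[w.length] z) := by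
  induction w generalizing z with
  | nil =>
    show (star (1 : MSHilbert A →L[ℂ] MSHilbert A)) (basisVec A z) = _
    rw [star_one]
    exact ContinuousLinearMap.one_apply _
  | cons i w ih =>
    rw [star_Tprod_cons, ContinuousLinearMap.mul_apply,
      starT_pos T hT i z (h 0 (by simp)),
      ih (mshift A z) (fun j hj => h (j + 1) (Nat.succ_lt_succ hj)),
      List.length_cons, Function.iterate_succ_apply]

lemma starTprod_neg (T : Fin N → (MSHilbert A →L[ℂ] MSHilbert A))
    (hT : IsGenFamily A T) (w : List (Fin N)) (z : MarkovShift A)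
    (h : ∃ j, ∃ hj : j < w.length, z.1 j ≠ w.get ⟨j, hj⟩) :
    star (Tprod T w) (basisVec A z) = 0 := by
  induction w generalizing z with
  | nil =>
    obtain ⟨j, hj, _⟩ := h
    exact absurd hj (by simp)
  | cons i w ih =>
    rw [star_Tprod_cons, ContinuousLinearMap.mul_apply]
    by_cases h0 : z.1 0 = i
    · rw [starT_pos T hT i z h0]
      obtain ⟨j, hj, hne⟩ := h
      cases j with
      | zero => exact absurd h0 hne
      | succ m =>
        exact ih (mshift A z) ⟨m, Nat.lt_of_succ_lt_succ hj, hne⟩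
    · rw [starT_neg T hT i z h0, map_zero]

end CK6


namespace CK6

variable {N : ℕ} {A : Matrix (Fin N) (Fin N) ℕ}

lemma ck_compact (A : Matrix (Fin N) (Fin N) ℕ) : CompactSpace (MarkovShift A) := by
  have hclosed : IsClosed {x : ℕ → Fin N | ∀ n, A (x n) (x (n + 1)) = 1} := by
    have : {x : ℕ → Fin N | ∀ n, A (x n) (x (n + 1)) = 1}
        = ⋂ n, (fun x : ℕ → Fin N => (x n, x (n + 1))) ⁻¹' {p | A p.1 p.2 = 1} := by
      ext x
      simp [Set.mem_iInter]
    rw [this]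
    exact isClosed_iInter fun n =>
      IsClosed.preimage ((continuous_apply n).prodMk (continuous_apply (n + 1)))
        (isClosed_discrete _)
  exact isCompact_iff_compactSpace.mp hclosed.isCompact

def cyl (y : MarkovShift A) (n : ℕ) : Set (MarkovShift A) :=
  {z | ∀ i < n, z.1 i = y.1 i}

lemma isOpen_cyl (y : MarkovShift A) (n : ℕ) : IsOpen (cyl y n) := by
  have : cyl y n = ⋂ i : Fin n, (fun z : MarkovShift A => z.1 i) ⁻¹' {y.1 i} := by
    ext z
    simp only [cyl, Set.mem_setOf_eq, Set.mem_iInter, Set.mem_preimage,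
      Set.mem_singleton_iff]
    exact ⟨fun h i => h i i.2, fun h i hi => h ⟨i, hi⟩⟩
  rw [this]
  exact isOpen_iInter_of_finite fun i =>
    ((continuous_apply (i : ℕ)).comp continuous_subtype_val).isOpen_preimage _
      (isOpen_discrete _)

lemma exists_cyl_subset {U : Set (MarkovShift A)} (hU : IsOpen U) {y : MarkovShift A}
    (hy : y ∈ U) : ∃ n, cyl y n ⊆ U := by
  rw [isOpen_induced_iff] at hU
  obtain ⟨V, hV, rfl⟩ := hU
  obtain ⟨I, su, h1, h2⟩ := isOpen_pi_iff.mp hV y.1 hy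
  refine ⟨I.sup id + 1, fun z hz => ?_⟩
  refine h2 ?_
  intro i hi
  have hlt : i < I.sup id + 1 := Nat.lt_succ_of_le (Finset.le_sup (f := id) hi)
  rw [hz i hlt]
  exact (h1 i hi).2

lemma exists_depth (τ : MarkovShift A ≃ₜ MarkovShift A) (k l : MarkovShift A → ℕ)
    (hk : Continuous k) (hl : Continuous l) :
    ∃ n, ∀ y z : MarkovShift A, (∀ i < n, z.1 i = y.1 i) →
      k z = k y ∧ l z = l y ∧ l y ≤ n ∧ ∀ i < k y, (τ z).1 i = (τ y).1 i := by
  haveI := ck_compact A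
  set W : MarkovShift A → Set (MarkovShift A) := fun y =>
    {z | k z = k y ∧ l z = l y ∧ ∀ i < k y, (τ z).1 i = (τ y).1 i} with hW
  have hWopen : ∀ y, IsOpen (W y) := by
    intro y
    have : W y = (k ⁻¹' {k y}) ∩ ((l ⁻¹' {l y}) ∩
        ⋂ i : Fin (k y), (fun z => (τ z).1 i) ⁻¹' {(τ y).1 i}) := by
      ext z
      simp only [hW, Set.mem_setOf_eq, Set.mem_inter_iff, Set.mem_preimage,
        Set.mem_singleton_iff, Set.mem_iInter]
      exact ⟨fun ⟨a, b, c⟩ => ⟨a, b, fun i => c i i.2⟩,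
        fun ⟨a, b, c⟩ => ⟨a, b, fun i hi => c ⟨i, hi⟩⟩⟩
    rw [this]
    refine (hk.isOpen_preimage _ (isOpen_discrete _)).inter
      ((hl.isOpen_preimage _ (isOpen_discrete _)).inter
        (isOpen_iInter_of_finite fun i => ?_))
    exact (((continuous_apply (i : ℕ)).comp continuous_subtype_val).comp
      τ.continuous).isOpen_preimage _ (isOpen_discrete _)
  have H : ∀ y : MarkovShift A, ∃ m, cyl y m ⊆ W y ∧ l y ≤ m := by
    intro y
    obtain ⟨n0, h0⟩ := exists_cyl_subset (hWopen y) (by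
      refine ⟨rfl, rfl, fun i _ => rfl⟩)
    refine ⟨max n0 (l y), fun z hz => h0 (fun i hi => hz i ?_), le_max_right _ _⟩
    exact lt_of_lt_of_le hi (le_max_left _ _)
  choose m hm1 hm2 using H
  obtain ⟨t, ht⟩ := IsCompact.elim_finite_subcover isCompact_univ
    (fun y => cyl y (m y)) (fun y => isOpen_cyl y (m y))
    (fun y _ => Set.mem_iUnion.2 ⟨y, fun i _ => rfl⟩)
  refine ⟨t.sup m, fun y z hz => ?_⟩
  obtain ⟨x, hxt, hyx⟩ : ∃ x ∈ t, y ∈ cyl x (m x) := by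
    have := ht (Set.mem_univ y)
    simpa using this
  have hmx : m x ≤ t.sup m := Finset.le_sup hxt
  have hzx : z ∈ cyl x (m x) := by
    intro i hi
    rw [hz i (lt_of_lt_of_le hi hmx)]
    exact hyx i hi
  have hyW : y ∈ W x := hm1 x hyx
  have hzW : z ∈ W x := hm1 x hzx
  obtain ⟨hk1, hl1, hτ1⟩ := hyW
  obtain ⟨hk2, hl2, hτ2⟩ := hzW
  refine ⟨hk2.trans hk1.symm, hl2.trans hl1.symm, ?_, ?_⟩
  · rw [hl1]
    exact le_trans (hm2 x) hmx
  · intro i hi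
    rw [hτ2 i (by rw [← hk1]; exact hi), ← hτ1 i (by rw [← hk1]; exact hi)]

end CK6


/-- if `A` satisfies condition (I) and `τ ∈ [σ_A]_c`, then the unitary
`u_τ` determined by `u_τ e_x = e_{τ(x)}` is a unitary belonging to `O_A`, it satisfies
`u_τ M_f u_τ^* = M_{f ∘ τ⁻¹}` for all `f ∈ C(X_A, ℂ)` (hence `u_τ D_A u_τ^* = D_A`,
i.e. `u_τ ∈ N(O_A, D_A)`), and `τ ↦ u_τ` is a group homomorphism. -/
theorem unitary_of_topFullGroup_elt
    {N : ℕ} (hN : 2 ≤ N) (A : Matrix (Fin N) (Fin N) ℕ)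
    (hA : ∀ i j, A i j = 0 ∨ A i j = 1) (hI : ConditionI A)
    (T : Fin N → (MSHilbert A →L[ℂ] MSHilbert A)) (hT : IsGenFamily A T)
    (M : C(MarkovShift A, ℂ) → (MSHilbert A →L[ℂ] MSHilbert A)) (hM : IsMultOp A M)
    (τ : MarkovShift A ≃ₜ MarkovShift A) (hτ : τ ∈ topFullGroup A)
    (u : MSHilbert A →L[ℂ] MSHilbert A)
    (hu : ∀ x : MarkovShift A, u (basisVec A x) = basisVec A (τ x)) :
    u ∈ unitary (MSHilbert A →L[ℂ] MSHilbert A)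
    ∧ u ∈ CKalg A T
    ∧ (∀ f : C(MarkovShift A, ℂ),
        u * M f * star u = M (f.comp (τ.symm : C(MarkovShift A, MarkovShift A))))
    ∧ ((fun a => u * a * star u) '' Set.range M = Set.range M)
    ∧ (∀ τ₁ τ₂ : MarkovShift A ≃ₜ MarkovShift A,
        τ₁ ∈ topFullGroup A → τ₂ ∈ topFullGroup A →
        ∀ u₁₂ u₁ u₂ : MSHilbert A →L[ℂ] MSHilbert A,
        (∀ x, u₁₂ (basisVec A x) = basisVec A ((τ₂.trans τ₁) x)) →
        (∀ x, u₁ (basisVec A x) = basisVec A (τ₁ x)) →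
        (∀ x, u₂ (basisVec A x) = basisVec A (τ₂ x)) →
        u₁₂ = u₁ * u₂) := by
  classical
  have hustar : ∀ z, star u (basisVec A z) = basisVec A (τ.symm z) := by
    intro z
    apply CK6.vec_ext
    intro y
    rw [CK6.inner_star_basis, hu]
    by_cases hy : y = τ.symm z
    · subst hy
      rw [τ.apply_symm_apply, CK6.inner_basis_basis_self, CK6.inner_basis_basis_self]
    · rw [CK6.inner_basis_basis_ne
        (fun hc => hy (by rw [← hc, Homeomorph.symm_apply_apply])),
        CK6.inner_basis_basis_ne hy]
  have hunit : u ∈ unitary (MSHilbert A →L[ℂ] MSHilbert A) := by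
    rw [Unitary.mem_iff]
    constructor
    · apply CK6.clm_ext_basis
      intro x
      rw [ContinuousLinearMap.mul_apply, hu, hustar, Homeomorph.symm_apply_apply,
        ContinuousLinearMap.one_apply]
    · apply CK6.clm_ext_basis
      intro x
      rw [ContinuousLinearMap.mul_apply, hustar, hu, Homeomorph.apply_symm_apply,
        ContinuousLinearMap.one_apply]
  have hconj : ∀ f : C(MarkovShift A, ℂ),
      u * M f * star u = M (f.comp (τ.symm : C(MarkovShift A, MarkovShift A))) := by
    intro f
    apply CK6.clm_ext_basis
    intro z
    rw [ContinuousLinearMap.mul_apply, ContinuousLinearMap.mul_apply, hustar, hM,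
      ContinuousLinearMap.map_smul, hu, Homeomorph.apply_symm_apply, hM]
    rfl
  have hmem : u ∈ CKalg A T := by
    obtain ⟨-, k, l, hk, hl, hkl⟩ := hτ
    obtain ⟨n, hn⟩ := CK6.exists_depth τ k l hk hl
    have hco : ∀ z : MarkovShift A, ∀ a : ℕ, (τ z).1 (a + k z) = z.1 (a + l z) := by
      intro z a
      have h2 := congrArg (fun s : MarkovShift A => s.1 a) (hkl z)
      simpa [CK6.iter_coord] using h2
    have key : ∀ w : Fin n → Fin N, ∃ μ : List (Fin N), ∀ z : MarkovShift A,
        (∀ i : Fin n, z.1 i = w i) → (τ z).1 = CK6.app μ (((mshift A)^[n] z).1) := by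
      intro w
      by_cases hw : ∃ y : MarkovShift A, ∀ i : Fin n, y.1 i = w i
      · obtain ⟨y, hy⟩ := hw
        refine ⟨List.ofFn (fun i : Fin (k y + (n - l y)) => (τ y).1 i), ?_⟩
        intro z hzw
        have hzy : ∀ i < n, z.1 i = y.1 i := fun i hi =>
          (hzw ⟨i, hi⟩).trans (hy ⟨i, hi⟩).symm
        obtain ⟨hk1, hl1, hl2, hτ1⟩ := hn y z hzy
        have e1 : ∀ j, k y ≤ j → (τ z).1 j = z.1 (j - k y + l y) := by
          intro j hj
          have h2 := hco z (j - k y)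
          rw [hk1, hl1, show j - k y + k y = j from by omega] at h2
          exact h2
        have e2 : ∀ j, k y ≤ j → (τ y).1 j = y.1 (j - k y + l y) := by
          intro j hj
          have h2 := hco y (j - k y)
          rw [show j - k y + k y = j from by omega] at h2
          exact h2
        funext j
        by_cases hj : j < k y + (n - l y)
        · rw [CK6.app_lt _ _ (by rw [List.length_ofFn]; exact hj), List.get_ofFn]
          show (τ z).1 j = (τ y).1 j
          by_cases hjk : j < k y
          · exact hτ1 j hjk
          · have hidx : j - k y + l y < n := by omega
            rw [e1 j (by omega), e2 j (by omega), hzy _ hidx]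
        · rw [CK6.app_ge _ _ (by rw [List.length_ofFn]; omega), List.length_ofFn,
            CK6.iter_coord]
          rw [e1 j (by omega), show j - k y + l y = j - (k y + (n - l y)) + n from by
            omega]
      · exact ⟨[], fun z hz => absurd ⟨z, hz⟩ hw⟩
    choose μ hμ using key
    have huS : u = ∑ w : Fin n → Fin N,
        CK6.Tprod T (μ w) * star (CK6.Tprod T (List.ofFn w)) := by
      apply CK6.clm_ext_basis
      intro z
      rw [hu, ContinuousLinearMap.sum_apply]
      set w₀ : Fin n → Fin N := fun i => z.1 i with hw₀
      have hmain : (CK6.Tprod T (μ w₀) * star (CK6.Tprod T (List.ofFn w₀)))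
          (basisVec A z) = basisVec A (τ z) := by
        rw [ContinuousLinearMap.mul_apply,
          CK6.starTprod_pos T hT (List.ofFn w₀) z
            (fun j hj => by rw [List.get_ofFn]; try rfl),
          List.length_ofFn,
          CK6.Tprod_apply_pos T hT (μ w₀) _ (τ z) (hμ w₀ z fun i => rfl)]
      have hzero : ∀ w : Fin n → Fin N, w ≠ w₀ →
          (CK6.Tprod T (μ w) * star (CK6.Tprod T (List.ofFn w)))
            (basisVec A z) = 0 := by
        intro w hw
        have hex : ∃ i : Fin n, z.1 i ≠ w i := by
          by_contra hc
          push_neg at hc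
          exact hw (funext fun i => ((hc i).symm : w i = z.1 i))
        obtain ⟨i, hi⟩ := hex
        have hne : ∃ j, ∃ hj : j < (List.ofFn w).length,
            z.1 j ≠ (List.ofFn w).get ⟨j, hj⟩ := by
          refine ⟨(i : ℕ), by rw [List.length_ofFn]; exact i.2, ?_⟩
          rw [List.get_ofFn]
          exact hi
        rw [ContinuousLinearMap.mul_apply, CK6.starTprod_neg T hT _ z hne, map_zero]
      rw [Finset.sum_eq_single_of_mem w₀ (Finset.mem_univ _)
        (fun b _ hb => hzero b hb)]
      exact hmain.symm
    rw [huS]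
    refine (StarSubalgebra.le_topologicalClosure _) ?_
    exact sum_mem fun w _ =>
      mul_mem (CK6.Tprod_mem T (μ w)) (star_mem (CK6.Tprod_mem T (List.ofFn w)))
  refine ⟨hunit, hmem, hconj, ?_, ?_⟩
  · apply Set.Subset.antisymm
    · rintro _ ⟨_, ⟨f, rfl⟩, rfl⟩
      exact ⟨f.comp (τ.symm : C(MarkovShift A, MarkovShift A)), (hconj f).symm⟩
    · rintro _ ⟨g, rfl⟩
      refine ⟨M (g.comp (τ : C(MarkovShift A, MarkovShift A))),
        ⟨g.comp (τ : C(MarkovShift A, MarkovShift A)), rfl⟩, ?_⟩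
      show u * M (g.comp (τ : C(MarkovShift A, MarkovShift A))) * star u = M g
      rw [hconj]
      congr 1
      ext x
      exact congrArg g (τ.apply_symm_apply x)
  · intro τ₁ τ₂ _ _ u₁₂ u₁ u₂ h12 h1 h2
    apply CK6.clm_ext_basis
    intro x
    rw [h12, ContinuousLinearMap.mul_apply, h2, h1]
    rfl
end
end

section
/- Assume A satisfies Cuntz–Krieger condition (I). Let u ∈ O_A be a partial isometry with u D_A u^* ⊆ D_A and u^* D_A u ⊆ D_A, so that u^*u = M_{χ_{X_u}} and uu^* = M_{χ_{Y_u}} for clopen subsets X_u, Y_u of X_A, and suppose h : X_u → Y_u is a homeomorphism such that u M_g u^* = M_{g ∘ h^{-1}} for every g ∈ C(X_A,ℂ) vanishing off X_u (with g ∘ h^{-1} extended by 0 off Y_u). Then for every x ∈ X_u and y = h(x), one has ‖T_{y_{[1,n]}}^* u T_{x_{[1,n]}}‖ = 1 for all n ∈ ℕ, where x_{[1,n]} = (x_1,…,x_n). -/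
open Matrix

noncomputable section

/-- The operator `T_{μ₁}⋯T_{μ_n}` associated to the word `μ₁⋯μ_n = (μ 0, …, μ (n-1))`. -/
def wordOp {N : ℕ} (A : Matrix (Fin N) (Fin N) ℕ)
    (T : Fin N → (MSHilbert A →L[ℂ] MSHilbert A)) (n : ℕ) (μ : ℕ → Fin N) :
    MSHilbert A →L[ℂ] MSHilbert A :=
  ((List.range n).map fun i => T (μ i)).prod


section Aux

variable {N : ℕ} (A : Matrix (Fin N) (Fin N) ℕ)

lemma bv_apply_self (z : MarkovShift A) : (basisVec A z) z = 1 := by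
  letI : DecidableEq (MarkovShift A) := Classical.decEq _
  simp [basisVec, lp.single_apply_self]

lemma bv_apply_ne {z w : MarkovShift A} (hwz : w ≠ z) : (basisVec A z) w = 0 := by
  letI : DecidableEq (MarkovShift A) := Classical.decEq _
  simp [basisVec, lp.single_apply_ne _ _ _ hwz, Pi.single_eq_of_ne hwz]

lemma inner_bv_left (z : MarkovShift A) (f : MSHilbert A) :
    (inner ℂ (basisVec A z) f : ℂ) = f z := by
  letI : DecidableEq (MarkovShift A) := Classical.decEq _
  simp [basisVec, lp.inner_single_left, RCLike.inner_apply]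

lemma bv_ext {a b : MSHilbert A}
    (hab : ∀ w, (inner ℂ (basisVec A w) a : ℂ) = inner ℂ (basisVec A w) b) : a = b := by
  refine lp.ext (funext fun w => ?_)
  have := hab w
  rwa [inner_bv_left, inner_bv_left] at this

lemma op_ext {S S' : MSHilbert A →L[ℂ] MSHilbert A}
    (hss : ∀ z, S (basisVec A z) = S' (basisVec A z)) : S = S' := by
  letI : DecidableEq (MarkovShift A) := Classical.decEq _
  refine ContinuousLinearMap.ext fun f => ?_
  have h1 : HasSum (fun z : MarkovShift A => lp.single 2 z (f z)) f :=
    lp.hasSum_single (by norm_num) f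
  have key : ∀ z : MarkovShift A, lp.single 2 z (f z) = f z • basisVec A z := by
    intro z
    calc lp.single 2 z (f z) = lp.single 2 z (f z • (1 : ℂ)) := by
          rw [smul_eq_mul, mul_one]
      _ = f z • lp.single 2 z 1 := lp.single_smul 2 z (f z) 1
      _ = f z • basisVec A z := rfl
  have hS : HasSum (fun z : MarkovShift A => f z • S (basisVec A z)) (S f) := by
    have := h1.mapL S
    simpa [key, _root_.map_smul] using this
  have hS' : HasSum (fun z : MarkovShift A => f z • S' (basisVec A z)) (S' f) := by
    have := h1.mapL S'
    simpa [key, _root_.map_smul] using this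
  have hfun : (fun z : MarkovShift A => f z • S (basisVec A z))
      = fun z => f z • S' (basisVec A z) := funext fun z => by rw [hss z]
  exact hS.unique (hfun ▸ hS')

lemma mshift_mcons (i : Fin N) (w : MarkovShift A) (h : A i (w.1 0) = 1) :
    mshift A (mcons A i w h) = w := rfl

lemma mcons_eq_iff (i : Fin N) (w z : MarkovShift A) (h : A i (w.1 0) = 1) :
    mcons A i w h = z ↔ (z.1 0 = i ∧ w = mshift A z) := by
  constructor
  · rintro rfl
    exact ⟨rfl, rfl⟩
  · rintro ⟨h0, rfl⟩
    apply Subtype.ext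
    funext m
    cases m with
    | zero => exact h0.symm
    | succ m => rfl

variable (T : Fin N → (MSHilbert A →L[ℂ] MSHilbert A))

lemma Tstar_apply (hT : IsGenFamily A T) (i : Fin N) (z : MarkovShift A) :
    star (T i) (basisVec A z)
      = if h : z.1 0 = i then basisVec A (mshift A z) else 0 := by
  apply bv_ext A
  intro w
  rw [ContinuousLinearMap.star_eq_adjoint, ContinuousLinearMap.adjoint_inner_right]
  by_cases hiw : A i (w.1 0) = 1
  · rw [(hT i w).1 hiw, inner_bv_left]
    by_cases h0 : z.1 0 = i
    · rw [dif_pos h0, inner_bv_left]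
      by_cases hw : w = mshift A z
      · have hmc : mcons A i w hiw = z := (mcons_eq_iff A i w z hiw).2 ⟨h0, hw⟩
        rw [hmc, bv_apply_self, hw, bv_apply_self]
      · have hmc : mcons A i w hiw ≠ z := by
          intro hc
          exact hw ((mcons_eq_iff A i w z hiw).1 hc).2
        rw [bv_apply_ne A hmc, bv_apply_ne A hw]
    · rw [dif_neg h0]
      have hmc : mcons A i w hiw ≠ z := by
        intro hc
        exact h0 ((mcons_eq_iff A i w z hiw).1 hc).1
      rw [bv_apply_ne A hmc]
      simp
  · rw [(hT i w).2 hiw]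
    simp only [inner_zero_left]
    by_cases h0 : z.1 0 = i
    · rw [dif_pos h0, inner_bv_left]
      have hw : w ≠ mshift A z := by
        intro hc
        apply hiw
        subst hc
        rw [show (mshift A z).1 0 = z.1 1 from rfl, ← h0]
        exact z.2 0
      rw [bv_apply_ne A hw]
    · rw [dif_neg h0, inner_zero_right]

lemma wordOp_succ (n : ℕ) (ν : ℕ → Fin N) :
    wordOp A T (n + 1) ν = wordOp A T n ν * T (ν n) := by
  unfold wordOp
  rw [List.range_succ, List.map_append, List.prod_append]
  simp

lemma mshift_iter_apply (z : MarkovShift A) (n m : ℕ) :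
    ((mshift A)^[n] z).1 m = z.1 (n + m) := by
  induction n generalizing m with
  | zero => simp
  | succ k ih =>
    rw [Function.iterate_succ_apply']
    show ((mshift A)^[k] z).1 (m + 1) = z.1 (k + 1 + m)
    rw [ih]
    have hnm : k + (m + 1) = k + 1 + m := by omega
    rw [hnm]

lemma wordOp_apply_iter (hT : IsGenFamily A T) (n : ℕ) (ν : ℕ → Fin N)
    (z : MarkovShift A) (hcond : ∀ i, i < n → z.1 i = ν i) :
    wordOp A T n ν (basisVec A ((mshift A)^[n] z)) = basisVec A z := by
  induction n with
  | zero => simp [wordOp]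
  | succ k ih =>
    rw [wordOp_succ, ContinuousLinearMap.mul_apply]
    have hadm : A (ν k) (((mshift A)^[k + 1] z).1 0) = 1 := by
      rw [mshift_iter_apply, ← hcond k (Nat.lt_succ_self k)]
      exact z.2 k
    rw [(hT (ν k) _).1 hadm]
    have hmc : mcons A (ν k) ((mshift A)^[k + 1] z) hadm = (mshift A)^[k] z := by
      apply Subtype.ext
      funext m
      cases m with
      | zero =>
        show ν k = ((mshift A)^[k] z).1 0
        rw [mshift_iter_apply]
        simpa using (hcond k (Nat.lt_succ_self k)).symm
      | succ m =>
        show ((mshift A)^[k + 1] z).1 m = ((mshift A)^[k] z).1 (m + 1)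
        rw [mshift_iter_apply, mshift_iter_apply]
        have hnm : k + 1 + m = k + (m + 1) := by omega
        rw [hnm]
    rw [hmc, ih (fun i hi => hcond i (by omega))]

open Classical in
lemma wordOp_star_apply (hT : IsGenFamily A T) (n : ℕ) (ν : ℕ → Fin N)
    (z : MarkovShift A) :
    star (wordOp A T n ν) (basisVec A z)
      = if (∀ i, i < n → z.1 i = ν i) then basisVec A ((mshift A)^[n] z) else 0 := by
  induction n with
  | zero =>
    rw [if_pos (fun i hi => absurd hi (Nat.not_lt_zero i))]
    simp [wordOp]
  | succ k ih =>
    rw [wordOp_succ, StarMul.star_mul, ContinuousLinearMap.mul_apply, ih]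
    by_cases hk : ∀ i, i < k → z.1 i = ν i
    · rw [if_pos hk, Tstar_apply A T hT]
      by_cases hzk : z.1 k = ν k
      · have h0 : ((mshift A)^[k] z).1 0 = ν k := by
          rw [mshift_iter_apply]; simpa using hzk
        rw [dif_pos h0, if_pos ?_]
        · rw [show mshift A ((mshift A)^[k] z) = (mshift A)^[k + 1] z from
            (Function.iterate_succ_apply' (mshift A) k z).symm]
        · intro i hi
          rcases Nat.lt_succ_iff_lt_or_eq.1 hi with hlt | heq
          · exact hk i hlt
          · subst heq; exact hzk
      · have h0 : ¬ ((mshift A)^[k] z).1 0 = ν k := by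
          rw [mshift_iter_apply]; simpa using hzk
        rw [dif_neg h0, if_neg (fun hc => hzk (hc k (Nat.lt_succ_self k)))]
    · rw [if_neg hk, map_zero,
        if_neg (fun hc => hk fun i hi => hc i (by omega))]

lemma proj_norm_le_one (q : MSHilbert A →L[ℂ] MSHilbert A)
    (h1 : star q = q) (h2 : q * q = q) : ‖q‖ ≤ 1 := by
  have h3 : ‖q‖ * ‖q‖ = ‖q‖ := by
    rw [← CStarRing.norm_star_mul_self (x := q), h1, h2]
  nlinarith [norm_nonneg q]

lemma pisom_norm_le_one (v : MSHilbert A →L[ℂ] MSHilbert A)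
    (hv : v * star v * v = v) : ‖v‖ ≤ 1 := by
  have h2 : (star v * v) * (star v * v) = star v * v := by
    have hassoc : (star v * v) * (star v * v) = star v * (v * star v * v) := by
      simp only [mul_assoc]
    rw [hassoc, hv]
  have h1 : star (star v * v) = star v * v := by simp [StarMul.star_mul]
  have hle := proj_norm_le_one A _ h1 h2
  have h4 : ‖v‖ * ‖v‖ ≤ 1 := by
    rw [← CStarRing.norm_star_mul_self (x := v)]
    exact hle
  nlinarith [norm_nonneg v]

lemma T_pisom (hT : IsGenFamily A T) (i : Fin N) :
    T i * star (T i) * T i = T i := by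
  apply op_ext A
  intro z
  rw [ContinuousLinearMap.mul_apply, ContinuousLinearMap.mul_apply]
  by_cases hiz : A i (z.1 0) = 1
  · rw [(hT i z).1 hiz, Tstar_apply A T hT,
      dif_pos (show (mcons A i z hiz).1 0 = i from rfl), mshift_mcons,
      (hT i z).1 hiz]
  · simp [(hT i z).2 hiz]

lemma wordOp_norm_le_one (hT : IsGenFamily A T) (n : ℕ) (ν : ℕ → Fin N) :
    ‖wordOp A T n ν‖ ≤ 1 := by
  induction n with
  | zero =>
    show ‖wordOp A T 0 ν‖ ≤ 1
    have : wordOp A T 0 ν = 1 := by simp [wordOp]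
    rw [this, ContinuousLinearMap.one_def]
    exact ContinuousLinearMap.norm_id_le
  | succ k ih =>
    rw [wordOp_succ]
    calc ‖wordOp A T k ν * T (ν k)‖ ≤ ‖wordOp A T k ν‖ * ‖T (ν k)‖ := norm_mul_le _ _
      _ ≤ 1 := by
          have hTk : ‖T (ν k)‖ ≤ 1 := pisom_norm_le_one A _ (T_pisom A T hT (ν k))
          nlinarith [norm_nonneg (wordOp A T k ν), norm_nonneg (T (ν k))]

lemma inner_star_apply_self (S : MSHilbert A →L[ℂ] MSHilbert A) (a : MSHilbert A) :
    (inner ℂ (star S a) (star S a) : ℂ) = inner ℂ a ((S * star S) a) := by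
  rw [ContinuousLinearMap.mul_apply, ContinuousLinearMap.star_eq_adjoint,
    ContinuousLinearMap.adjoint_inner_left]

lemma norm_eq_one_of_inner {a : MSHilbert A} (hin : (inner ℂ a a : ℂ) = 1) :
    ‖a‖ = 1 := by
  have h2 := congrArg Complex.re hin
  have h3 : (‖a‖ : ℝ) ^ 2 = 1 := by
    rw [show (inner ℂ a a : ℂ).re = RCLike.re (inner ℂ a a : ℂ) from rfl,
      inner_self_eq_norm_sq] at h2
    simpa using h2
  nlinarith [norm_nonneg a]

end Aux

open Classical in
/-- Indicator function of a clopen set, as a continuous map. -/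
noncomputable def indCM {X : Type*} [TopologicalSpace X] (s : Set X) (hs : IsClopen s) :
    C(X, ℂ) where
  toFun := fun z => if z ∈ s then 1 else 0
  continuous_toFun := by
    have hb : Continuous s.boolIndicator :=
      (continuous_boolIndicator_iff_isClopen s).2 hs
    have hc : Continuous ((fun b : Bool => if b then (1 : ℂ) else 0) ∘ s.boolIndicator) :=
      (continuous_of_discreteTopology).comp hb
    convert hc using 1
    funext z
    by_cases hz : z ∈ s <;> simp [Set.boolIndicator, hz]

lemma indCM_of_mem {X : Type*} [TopologicalSpace X] {s : Set X} (hs : IsClopen s)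
    {z : X} (hz : z ∈ s) : indCM s hs z = 1 := by
  simp [indCM, hz]

lemma indCM_of_not_mem {X : Type*} [TopologicalSpace X] {s : Set X} (hs : IsClopen s)
    {z : X} (hz : z ∉ s) : indCM s hs z = 0 := by
  simp [indCM, hz]

set_option maxHeartbeats 2000000 in
/-- `A` satisfies condition (I); `u ∈ O_A` is a partial isometry with
`u D_A u^* ⊆ D_A` and `u^* D_A u ⊆ D_A`, `u^*u = M_{χ_{X_u}}`, `uu^* = M_{χ_{Y_u}}` for
clopen `X_u, Y_u`, and `h : X_u → Y_u` is a homeomorphism with `u M_g u^* = M_{g∘h⁻¹}`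
for every `g` vanishing off `X_u`.  Then for every `x ∈ X_u` and `y = h(x)`,
`‖T_{y_{[1,n]}}^* u T_{x_{[1,n]}}‖ = 1` for all `n`. -/
theorem norm_compression_eq_one
    {N : ℕ} (hN : 2 ≤ N) (A : Matrix (Fin N) (Fin N) ℕ)
    (hA : ∀ i j, A i j = 0 ∨ A i j = 1) (hI : ConditionI A)
    (T : Fin N → (MSHilbert A →L[ℂ] MSHilbert A)) (hT : IsGenFamily A T)
    (M : C(MarkovShift A, ℂ) → (MSHilbert A →L[ℂ] MSHilbert A)) (hM : IsMultOp A M)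
    (u : MSHilbert A →L[ℂ] MSHilbert A)
    (humem : u ∈ CKalg A T) (hupi : u * star u * u = u)
    (hconj : ∀ f : C(MarkovShift A, ℂ), ∃ g, u * M f * star u = M g)
    (hconj' : ∀ f : C(MarkovShift A, ℂ), ∃ g, star u * M f * u = M g)
    (Xu Yu : Set (MarkovShift A)) (hXu : IsClopen Xu) (hYu : IsClopen Yu)
    (χX χY : C(MarkovShift A, ℂ))
    (hχX : ∀ x, χX x = Set.indicator Xu (fun _ => (1 : ℂ)) x)
    (hχY : ∀ x, χY x = Set.indicator Yu (fun _ => (1 : ℂ)) x)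
    (hpu : star u * u = M χX) (hqu : u * star u = M χY)
    (h : Xu ≃ₜ Yu)
    (hh : ∀ g g' : C(MarkovShift A, ℂ),
      (∀ x ∉ Xu, g x = 0) → (∀ y ∉ Yu, g' y = 0) →
      (∀ y : Yu, g' y = g (h.symm y)) →
      u * M g * star u = M g') :
    ∀ (x : MarkovShift A) (hx : x ∈ Xu) (n : ℕ),
      ‖star (wordOp A T n ((h ⟨x, hx⟩ : MarkovShift A)).1) * u * wordOp A T n x.1‖
        = 1 := by
  classical
  intro x hx n
  set y : MarkovShift A := ((h ⟨x, hx⟩ : Yu) : MarkovShift A) with hydef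
  -- the cylinder set of the first `n` letters of `y`
  set Cν : Set (MarkovShift A) := {z : MarkovShift A | ∀ i, i < n → z.1 i = y.1 i}
    with hCdef
  have hCcl : IsClopen Cν := by
    have hre : Cν = ⋂ i ∈ Finset.range n, {z : MarkovShift A | z.1 i = y.1 i} := by
      rw [hCdef]
      ext z
      simp
    rw [hre]
    refine isClopen_biInter_finset fun i _ => ?_
    exact (isClopen_discrete {y.1 i}).preimage
      ((continuous_apply i).comp continuous_subtype_val)
  -- the preimage of the cylinder under `h`, as a subset of the ambient space
  set P : Set Xu := (fun p : Xu => ((h p : Yu) : MarkovShift A)) ⁻¹' Cν with hPdef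
  have hPcl : IsClopen P := hCcl.preimage (continuous_subtype_val.comp h.continuous)
  set F : Set (MarkovShift A) := Subtype.val '' P with hFdef
  have hFcl : IsClopen F :=
    ⟨hXu.isClosed.isClosedMap_subtype_val P hPcl.isClosed,
     hXu.isOpen.isOpenMap_subtype_val P hPcl.isOpen⟩
  have hFmem : ∀ z, z ∈ F ↔ ∃ hz : z ∈ Xu, ((h ⟨z, hz⟩ : Yu) : MarkovShift A) ∈ Cν := by
    intro z
    constructor
    · rintro ⟨p, hp, rfl⟩
      refine ⟨p.2, ?_⟩
      have he : (⟨(p : MarkovShift A), p.2⟩ : Xu) = p := Subtype.ext rfl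
      rw [he]
      exact hp
    · rintro ⟨hz, hc⟩
      exact ⟨⟨z, hz⟩, hc, rfl⟩
  have hFXu : F ⊆ Xu := by
    rintro z ⟨p, _, rfl⟩
    exact p.2
  have hxF : x ∈ F := by
    refine (hFmem x).2 ⟨hx, ?_⟩
    rw [hCdef]
    intro i hi
    rw [hydef]
  -- indicator continuous maps
  set χC : C(MarkovShift A, ℂ) := indCM Cν hCcl with hχCdef
  set χI : C(MarkovShift A, ℂ) := indCM (Cν ∩ Yu) (hCcl.inter hYu) with hχIdef
  set χF : C(MarkovShift A, ℂ) := indCM F hFcl with hχFdef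
  -- multiplicativity of M
  have hMmul : ∀ f g : C(MarkovShift A, ℂ), M f * M g = M (f * g) := by
    intro f g
    apply op_ext A
    intro z
    rw [ContinuousLinearMap.mul_apply, hM g z, (M f).map_smul, hM f z, hM (f * g) z,
      smul_smul, ContinuousMap.mul_apply, mul_comm (g z) (f z)]
  have hχY' : ∀ z, χY z = if z ∈ Yu then (1 : ℂ) else 0 := by
    intro z
    rw [hχY z]
    by_cases hz : z ∈ Yu
    · rw [Set.indicator_of_mem hz, if_pos hz]
    · rw [Set.indicator_of_notMem hz, if_neg hz]
  have hχX' : ∀ z, χX z = if z ∈ Xu then (1 : ℂ) else 0 := by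
    intro z
    rw [hχX z]
    by_cases hz : z ∈ Xu
    · rw [Set.indicator_of_mem hz, if_pos hz]
    · rw [Set.indicator_of_notMem hz, if_neg hz]
  have hCY : χC * χY = χI := by
    ext z
    rw [ContinuousMap.mul_apply, hχY' z, hχCdef, hχIdef]
    by_cases hc : z ∈ Cν
    · by_cases hy2 : z ∈ Yu
      · rw [indCM_of_mem hCcl hc, if_pos hy2, indCM_of_mem (hCcl.inter hYu) ⟨hc, hy2⟩,
          one_mul]
      · rw [if_neg hy2, mul_zero,
          indCM_of_not_mem (hCcl.inter hYu) (fun hcc => hy2 hcc.2)]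
    · rw [indCM_of_not_mem hCcl hc, zero_mul,
        indCM_of_not_mem (hCcl.inter hYu) (fun hcc => hc hcc.1)]
  -- `Wν Wν* = M χC`
  have hWνWν : wordOp A T n y.1 * star (wordOp A T n y.1) = M χC := by
    apply op_ext A
    intro z
    rw [ContinuousLinearMap.mul_apply, wordOp_star_apply A T hT, hM χC z]
    by_cases hzc : ∀ i, i < n → z.1 i = y.1 i
    · have hzC : z ∈ Cν := by rw [hCdef]; exact hzc
      rw [if_pos hzc, wordOp_apply_iter A T hT n y.1 z hzc, hχCdef,
        indCM_of_mem hCcl hzC, one_smul]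
    · have hzC : z ∉ Cν := by rw [hCdef]; exact hzc
      rw [if_neg hzc, map_zero, hχCdef, indCM_of_not_mem hCcl hzC, zero_smul]
  have hq1 : M χC * u = M χI * u := by
    calc M χC * u = M χC * (u * star u * u) := by rw [hupi]
      _ = M χC * (M χY * u) := by rw [hqu]
      _ = M χC * M χY * u := by rw [← mul_assoc]
      _ = M (χC * χY) * u := by rw [hMmul]
      _ = M χI * u := by rw [hCY]
  -- apply the conjugation hypothesis
  have hgXu : ∀ z ∉ Xu, χF z = 0 := fun z hz =>
    indCM_of_not_mem hFcl (fun hzf => hz (hFXu hzf))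
  have hg'Yu : ∀ z ∉ Yu, χI z = 0 := fun z hz =>
    indCM_of_not_mem (hCcl.inter hYu) (fun hzc => hz hzc.2)
  have hagree : ∀ w : Yu, χI w = χF (h.symm w) := by
    intro w
    have hiff : ((h.symm w : Xu) : MarkovShift A) ∈ F ↔ (w : MarkovShift A) ∈ Cν := by
      rw [hFmem]
      constructor
      · rintro ⟨hz, hc⟩
        have he : (⟨((h.symm w : Xu) : MarkovShift A), hz⟩ : Xu) = h.symm w :=
          Subtype.ext rfl
        rw [he, Homeomorph.apply_symm_apply] at hc
        exact hc
      · intro hc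
        refine ⟨(h.symm w).2, ?_⟩
        have he : (⟨((h.symm w : Xu) : MarkovShift A), (h.symm w).2⟩ : Xu) = h.symm w :=
          Subtype.ext rfl
        rw [he, Homeomorph.apply_symm_apply]
        exact hc
    by_cases hc : (w : MarkovShift A) ∈ Cν
    · rw [hχIdef, hχFdef, indCM_of_mem (hCcl.inter hYu) ⟨hc, w.2⟩,
        indCM_of_mem hFcl (hiff.2 hc)]
    · rw [hχIdef, hχFdef, indCM_of_not_mem (hCcl.inter hYu) (fun hcc => hc hcc.1),
        indCM_of_not_mem hFcl (fun hf => hc (hiff.1 hf))]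
  have hg : u * M χF * star u = M χI := hh χF χI hgXu hg'Yu hagree
  have hXFX : χX * χF * χX = χF := by
    ext z
    rw [ContinuousMap.mul_apply, ContinuousMap.mul_apply, hχX' z, hχFdef]
    by_cases hzf : z ∈ F
    · rw [if_pos (hFXu hzf), indCM_of_mem hFcl hzf, one_mul, mul_one]
    · rw [indCM_of_not_mem hFcl hzf, mul_zero, zero_mul]
  have hkey : star u * M χI * u = M χF := by
    calc star u * M χI * u = star u * (u * M χF * star u) * u := by rw [hg]
      _ = star u * u * M χF * (star u * u) := by simp only [mul_assoc]
      _ = M χX * M χF * M χX := by rw [hpu]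
      _ = M (χX * χF * χX) := by rw [hMmul, hMmul]
      _ = M χF := by rw [hXFX]
  -- the key vector computation
  have hWμ : wordOp A T n x.1 (basisVec A ((mshift A)^[n] x)) = basisVec A x :=
    wordOp_apply_iter A T hT n x.1 x (fun i _ => rfl)
  set V := star (wordOp A T n y.1) * u * wordOp A T n x.1 with hVdef
  have hVe : (inner ℂ (V (basisVec A ((mshift A)^[n] x)))
      (V (basisVec A ((mshift A)^[n] x))) : ℂ) = 1 := by
    have hV0 : V (basisVec A ((mshift A)^[n] x)) =
        star (wordOp A T n y.1) (u (basisVec A x)) := by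
      rw [hVdef, ContinuousLinearMap.mul_apply, ContinuousLinearMap.mul_apply, hWμ]
    rw [hV0, inner_star_apply_self, hWνWν]
    have hq1' : M χC (u (basisVec A x)) = M χI (u (basisVec A x)) :=
      congrArg (fun S : MSHilbert A →L[ℂ] MSHilbert A => S (basisVec A x)) hq1
    rw [hq1']
    have hmove : (inner ℂ (u (basisVec A x)) (M χI (u (basisVec A x))) : ℂ)
        = inner ℂ (basisVec A x) ((star u * M χI * u) (basisVec A x)) := by
      rw [ContinuousLinearMap.mul_apply, ContinuousLinearMap.mul_apply,
        ContinuousLinearMap.star_eq_adjoint, ContinuousLinearMap.adjoint_inner_right]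
    rw [hmove, hkey, hM χF x, hχFdef, indCM_of_mem hFcl hxF, one_smul, inner_bv_left,
      bv_apply_self]
  have hnorme : ‖V (basisVec A ((mshift A)^[n] x))‖ = 1 := norm_eq_one_of_inner A hVe
  have he0 : ‖basisVec A ((mshift A)^[n] x)‖ = 1 := by
    apply norm_eq_one_of_inner A
    rw [inner_bv_left, bv_apply_self]
  have hu1 : ‖u‖ ≤ 1 := pisom_norm_le_one A u hupi
  have hWν1 : ‖star (wordOp A T n y.1)‖ ≤ 1 := by
    rw [norm_star (wordOp A T n y.1)]
    exact wordOp_norm_le_one A T hT n y.1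
  have hWμ1 : ‖wordOp A T n x.1‖ ≤ 1 := wordOp_norm_le_one A T hT n x.1
  have hVle : ‖V‖ ≤ 1 := by
    rw [hVdef]
    calc ‖star (wordOp A T n y.1) * u * wordOp A T n x.1‖
        ≤ ‖star (wordOp A T n y.1) * u‖ * ‖wordOp A T n x.1‖ := norm_mul_le _ _
      _ ≤ 1 := by
          have h2 := norm_mul_le (star (wordOp A T n y.1)) u
          nlinarith [norm_nonneg u, norm_nonneg (star (wordOp A T n y.1)),
            norm_nonneg (wordOp A T n x.1), norm_nonneg (star (wordOp A T n y.1) * u)]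
  have hVge : 1 ≤ ‖V‖ := by
    have hle := V.le_opNorm (basisVec A ((mshift A)^[n] x))
    rw [hnorme, he0, mul_one] at hle
    exact hle
  linarith
end
end

section
/- Assume A satisfies Cuntz–Krieger condition (I). Let u ∈ F_A be a partial isometry with u D_A u^* ⊆ D_A and u^* D_A u ⊆ D_A, so that u^*u = M_{χ_{X_u}} and uu^* = M_{χ_{Y_u}} for clopen subsets X_u, Y_u of X_A, and suppose h : X_u → Y_u is a homeomorphism such that u M_g u^* = M_{g ∘ h^{-1}} for every g ∈ C(X_A,ℂ) vanishing off X_u. Then there exists k ∈ ℕ such that σ_A^k(h(x)) = σ_A^k(x) for every x ∈ X_u; equivalently, writing y = h(x), one has y_n = x_n for all n > k. -/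
open Matrix

noncomputable section

/-- The word `(μ 0, …, μ (n-1))` is admissible for `X_A`. -/
def IsAdmissible {N : ℕ} (A : Matrix (Fin N) (Fin N) ℕ) (n : ℕ) (μ : ℕ → Fin N) :
    Prop :=
  ∃ x : MarkovShift A, ∀ i < n, x.1 i = μ i

/-- The canonical AF-subalgebra `F_A ⊆ O_A`: the norm closure of the ∗-subalgebra
generated by the elements `T_μ T_ν^*` with `μ, ν` admissible words of equal length. -/
def AFalg {N : ℕ} (A : Matrix (Fin N) (Fin N) ℕ)
    (T : Fin N → (MSHilbert A →L[ℂ] MSHilbert A)) :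
    StarSubalgebra ℂ (MSHilbert A →L[ℂ] MSHilbert A) :=
  (StarAlgebra.adjoin ℂ
    { a | ∃ (n : ℕ) (μ ν : ℕ → Fin N), IsAdmissible A n μ ∧ IsAdmissible A n ν ∧
        a = wordOp A T n μ * star (wordOp A T n ν) }).topologicalClosure

section Aux

open scoped ComplexConjugate

variable {N : ℕ} {A : Matrix (Fin N) (Fin N) ℕ}

lemma basisVec_self (x : MarkovShift A) : (basisVec A x) x = 1 := by
  letI : DecidableEq (MarkovShift A) := Classical.decEq _
  exact lp.single_apply_self (E := fun _ : MarkovShift A => ℂ) 2 x (1 : ℂ)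

lemma basisVec_ne {x y : MarkovShift A} (h : y ≠ x) : (basisVec A x) y = 0 := by
  letI : DecidableEq (MarkovShift A) := Classical.decEq _
  exact lp.single_apply_ne (E := fun _ : MarkovShift A => ℂ) 2 x (1 : ℂ) h

lemma single_eq_smul_basisVec [DecidableEq (MarkovShift A)] (z : MarkovShift A) (c : ℂ) :
    lp.single 2 z c = c • basisVec A z := by
  apply lp.ext
  funext y
  rw [lp.coeFn_smul, Pi.smul_apply]
  by_cases hy : y = z
  · subst hy
    rw [lp.single_apply_self (E := fun _ : MarkovShift A => ℂ), basisVec_self, smul_eq_mul, mul_one]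
  · rw [lp.single_apply_ne (E := fun _ : MarkovShift A => ℂ) 2 z c hy, basisVec_ne hy, smul_zero]

/-- Evaluation at a point as a continuous linear functional on `ℓ²(X_A)`. -/
def evalCLM (y : MarkovShift A) : MSHilbert A →L[ℂ] ℂ :=
  LinearMap.mkContinuous
    { toFun := fun v => v y
      map_add' := fun v w => by
        change (v + w : MSHilbert A) y = (v : MSHilbert A) y + (w : MSHilbert A) y
        rw [lp.coeFn_add]; rfl
      map_smul' := fun c v => by
        change (c • v : MSHilbert A) y = RingHom.id ℂ c • (v : MSHilbert A) y
        rw [lp.coeFn_smul]; rfl }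
    1 (fun v => by
      rw [one_mul]
      exact lp.norm_apply_le_norm (by norm_num) v y)

lemma evalCLM_apply (y : MarkovShift A) (v : MSHilbert A) : evalCLM y v = v y := rfl

lemma hasSum_apply (B : MSHilbert A →L[ℂ] MSHilbert A) (v : MSHilbert A) (y : MarkovShift A) :
    HasSum (fun z => v z * (B (basisVec A z)) y) ((B v) y) := by
  classical
  have h1 := lp.hasSum_single (E := fun _ : MarkovShift A => ℂ) (p := 2) (by norm_num) v
  have h2 := h1.mapL ((evalCLM y).comp B)
  have e : (fun z : MarkovShift A => v z * (B (basisVec A z)) y)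
      = fun z => ((evalCLM y).comp B) (lp.single 2 z (v z)) := by
    funext z
    rw [single_eq_smul_basisVec z (v z)]
    simp only [ContinuousLinearMap.comp_apply, _root_.map_smul, smul_eq_mul, evalCLM_apply]
  rw [e]
  exact h2

lemma multOp_apply {M : C(MarkovShift A, ℂ) → (MSHilbert A →L[ℂ] MSHilbert A)}
    (hM : IsMultOp A M) (g : C(MarkovShift A, ℂ)) (v : MSHilbert A) (y : MarkovShift A) :
    (M g v) y = g y * v y := by
  classical
  have h1 := hasSum_apply (M g) v y
  have h2 : HasSum (fun z : MarkovShift A => if z = y then g y * v y else 0) (g y * v y) :=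
    hasSum_ite_eq y _
  have e : (fun z : MarkovShift A => v z * (M g (basisVec A z)) y)
      = fun z => if z = y then g y * v y else 0 := by
    funext z
    rw [hM g z, lp.coeFn_smul, Pi.smul_apply]
    by_cases hz : z = y
    · subst hz
      rw [if_pos rfl, basisVec_self, smul_eq_mul, mul_one, mul_comm]
    · rw [if_neg hz, basisVec_ne (Ne.symm hz), smul_zero, mul_zero]
  rw [e] at h1
  exact h1.unique h2

lemma star_apply_basis (B : MSHilbert A →L[ℂ] MSHilbert A) (x y : MarkovShift A) :
    ((star B) (basisVec A x)) y = conj ((B (basisVec A y)) x) := by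
  letI : DecidableEq (MarkovShift A) := Classical.decEq _
  have h1 : ((star B) (basisVec A x)) y
      = inner (𝕜 := ℂ) (basisVec A y) ((star B) (basisVec A x)) := by
    rw [show basisVec A y = lp.single 2 y (1 : ℂ) from rfl, lp.inner_single_left]
    rw [RCLike.inner_apply, _root_.map_one, mul_one]
  rw [h1, ContinuousLinearMap.star_eq_adjoint, ContinuousLinearMap.adjoint_inner_right]
  rw [show basisVec A x = lp.single 2 x (1 : ℂ) from rfl, lp.inner_single_right]
  rw [RCLike.inner_apply, one_mul]


/-- Matrix-entry support condition: `B e_x` supported on `y` with `σ^k y = σ^l x`. -/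
def Qp (A : Matrix (Fin N) (Fin N) ℕ) (k l : ℕ) (B : MSHilbert A →L[ℂ] MSHilbert A) : Prop :=
  ∀ x y : MarkovShift A, (B (basisVec A x)) y ≠ 0 →
    (mshift A)^[k] y = (mshift A)^[l] x

lemma Qp_mono {k l : ℕ} {B : MSHilbert A →L[ℂ] MSHilbert A} (h : Qp A k l B) (j : ℕ) :
    Qp A (k + j) (l + j) B := by
  intro x y hne
  have e := h x y hne
  rw [add_comm k j, add_comm l j, Function.iterate_add_apply, Function.iterate_add_apply, e]

lemma Qp_le {k : ℕ} {B : MSHilbert A →L[ℂ] MSHilbert A} (h : Qp A k k B) {m : ℕ} (hm : k ≤ m) :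
    Qp A m m B := by
  have := Qp_mono h (m - k)
  rwa [Nat.add_sub_cancel' hm] at this

lemma Qp_add {k : ℕ} {B C : MSHilbert A →L[ℂ] MSHilbert A}
    (hB : Qp A k k B) (hC : Qp A k k C) : Qp A k k (B + C) := by
  intro x y hne
  have e : ((B + C) (basisVec A x)) y = (B (basisVec A x)) y + (C (basisVec A x)) y := by
    rw [ContinuousLinearMap.add_apply, lp.coeFn_add]; rfl
  rw [e] at hne
  by_cases h1 : (B (basisVec A x)) y = 0
  · exact hC x y (fun h2 => hne (by rw [h1, h2, add_zero]))
  · exact hB x y h1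

lemma Qp_mul {k l m n : ℕ} {B C : MSHilbert A →L[ℂ] MSHilbert A}
    (hB : Qp A k l B) (hC : Qp A m n C) : Qp A (k + m) (l + n) (B * C) := by
  intro x y hne
  have h1 := hasSum_apply B (C (basisVec A x)) y
  have hBC : ((B * C) (basisVec A x)) y = (B (C (basisVec A x))) y := rfl
  rw [hBC] at hne
  obtain ⟨z, hz⟩ : ∃ z, (C (basisVec A x)) z * (B (basisVec A z)) y ≠ 0 := by
    by_contra hall
    push_neg at hall
    have h0 : (fun z => (C (basisVec A x)) z * (B (basisVec A z)) y)
        = fun _ : MarkovShift A => (0 : ℂ) := funext hall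
    rw [h0] at h1
    exact hne (h1.unique hasSum_zero)
  have hzC : (C (basisVec A x)) z ≠ 0 := fun h0 => hz (by rw [h0, zero_mul])
  have hzB : (B (basisVec A z)) y ≠ 0 := fun h0 => hz (by rw [h0, mul_zero])
  have e1 := hB z y hzB
  have e2 := hC x z hzC
  rw [add_comm k m, Function.iterate_add_apply, e1, ← Function.iterate_add_apply,
    add_comm m l, Function.iterate_add_apply, e2, ← Function.iterate_add_apply]

lemma Qp_star {k l : ℕ} {B : MSHilbert A →L[ℂ] MSHilbert A} (h : Qp A k l B) :
    Qp A l k (star B) := by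
  intro x y hne
  rw [star_apply_basis] at hne
  have h0 : (B (basisVec A y)) x ≠ 0 := fun h0 => hne (by rw [h0, map_zero])
  exact (h y x h0).symm

lemma Qp_one : Qp A 0 0 (1 : MSHilbert A →L[ℂ] MSHilbert A) := by
  intro x y hne
  have hyx : y = x := by
    by_contra h0
    exact hne (by rw [ContinuousLinearMap.one_apply]; exact basisVec_ne h0)
  rw [hyx]

lemma Qp_algebraMap (c : ℂ) :
    Qp A 0 0 (algebraMap ℂ (MSHilbert A →L[ℂ] MSHilbert A) c) := by
  intro x y hne
  have e : ((algebraMap ℂ (MSHilbert A →L[ℂ] MSHilbert A) c) (basisVec A x)) y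
      = c * (basisVec A x) y := by
    rw [Algebra.algebraMap_eq_smul_one, ContinuousLinearMap.smul_apply,
      ContinuousLinearMap.one_apply, lp.coeFn_smul, Pi.smul_apply, smul_eq_mul]
  rw [e] at hne
  have hyx : y = x := by
    by_contra h0
    exact hne (by rw [basisVec_ne h0, mul_zero])
  rw [hyx]

lemma Qp_T {T : Fin N → (MSHilbert A →L[ℂ] MSHilbert A)} (hT : IsGenFamily A T) (i : Fin N) :
    Qp A 1 0 (T i) := by
  intro x y hne
  by_cases hadm : A i (x.1 0) = 1
  · rw [(hT i x).1 hadm] at hne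
    have hyx : y = mcons A i x hadm := by
      by_contra h0
      exact hne (basisVec_ne h0)
    subst hyx
    simp only [Function.iterate_one, Function.iterate_zero, id_eq]
    apply Subtype.ext
    funext n
    rfl
  · rw [(hT i x).2 hadm] at hne
    exact absurd (by rw [lp.coeFn_zero]; rfl) hne

lemma Qp_wordOp {T : Fin N → (MSHilbert A →L[ℂ] MSHilbert A)} (hT : IsGenFamily A T)
    (n : ℕ) (μ : ℕ → Fin N) : Qp A n 0 (wordOp A T n μ) := by
  induction n with
  | zero =>
    have e : wordOp A T 0 μ = 1 := by simp [wordOp]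
    rw [e]; exact Qp_one
  | succ n ih =>
    have e : wordOp A T (n + 1) μ = wordOp A T n μ * T (μ n) := by
      simp [wordOp, List.range_succ]
    rw [e]
    exact Qp_mul ih (Qp_T hT (μ n))

lemma exists_Qp_of_mem_adjoin {T : Fin N → (MSHilbert A →L[ℂ] MSHilbert A)}
    (hT : IsGenFamily A T) {F : MSHilbert A →L[ℂ] MSHilbert A}
    (hF : F ∈ StarAlgebra.adjoin ℂ
      { a | ∃ (n : ℕ) (μ ν : ℕ → Fin N), IsAdmissible A n μ ∧ IsAdmissible A n ν ∧
          a = wordOp A T n μ * star (wordOp A T n ν) }) :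
    ∃ k, Qp A k k F := by
  induction hF using StarAlgebra.adjoin_induction with
  | mem a ha =>
    obtain ⟨n, μ, ν, -, -, rfl⟩ := ha
    refine ⟨n, ?_⟩
    have := Qp_mul (Qp_wordOp hT n μ) (Qp_star (Qp_wordOp hT n ν))
    simpa only [Nat.add_zero, Nat.zero_add] using this
  | algebraMap c => exact ⟨0, Qp_algebraMap c⟩
  | add a b ha hb iha ihb =>
    obtain ⟨k1, h1⟩ := iha
    obtain ⟨k2, h2⟩ := ihb
    exact ⟨max k1 k2, Qp_add (Qp_le h1 (le_max_left _ _)) (Qp_le h2 (le_max_right _ _))⟩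
  | mul a b ha hb iha ihb =>
    obtain ⟨k1, h1⟩ := iha
    obtain ⟨k2, h2⟩ := ihb
    exact ⟨k1 + k2, Qp_mul h1 h2⟩
  | star a ha iha =>
    obtain ⟨k1, h1⟩ := iha
    exact ⟨k1, Qp_star h1⟩

lemma indicator_cont {X : Type*} [TopologicalSpace X] {E : Set X} (hE : IsClopen E) :
    Continuous (E.indicator fun _ => (1 : ℂ)) := by
  classical
  refine IsLocallyConstant.continuous (fun s => ?_)
  have e : (E.indicator (fun _ => (1 : ℂ))) ⁻¹' s =
      (if (1 : ℂ) ∈ s then E else ∅) ∪ (if (0 : ℂ) ∈ s then Eᶜ else ∅) := by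
    ext w
    by_cases hw : w ∈ E
    · simp only [Set.mem_preimage, Set.indicator_of_mem hw]
      split_ifs with h1 h0 <;> simp [hw, h1, *]
    · simp only [Set.mem_preimage, Set.indicator_of_notMem hw]
      split_ifs with h1 h0 <;> simp [hw, h1, *]
  rw [e]
  split_ifs <;>
    simp [hE.2, hE.1.isOpen_compl, isOpen_empty, IsOpen.union]

end Aux
set_option maxHeartbeats 1000000 in
/-- `A` satisfies condition (I); `u ∈ F_A` is a partial isometry with
`u D_A u^* ⊆ D_A` and `u^* D_A u ⊆ D_A`, `u^*u = M_{χ_{X_u}}`, `uu^* = M_{χ_{Y_u}}` for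
clopen `X_u, Y_u`, and `h : X_u → Y_u` is a homeomorphism with `u M_g u^* = M_{g∘h⁻¹}`
for every `g` vanishing off `X_u`.  Then there is `k ∈ ℕ` with
`σ_A^k(h(x)) = σ_A^k(x)` for every `x ∈ X_u`. -/
theorem exists_iterate_eq_of_mem_AFalg
    {N : ℕ} (hN : 2 ≤ N) (A : Matrix (Fin N) (Fin N) ℕ)
    (hA : ∀ i j, A i j = 0 ∨ A i j = 1) (hI : ConditionI A)
    (T : Fin N → (MSHilbert A →L[ℂ] MSHilbert A)) (hT : IsGenFamily A T)
    (M : C(MarkovShift A, ℂ) → (MSHilbert A →L[ℂ] MSHilbert A)) (hM : IsMultOp A M)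
    (u : MSHilbert A →L[ℂ] MSHilbert A)
    (humem : u ∈ AFalg A T) (hupi : u * star u * u = u)
    (hconj : ∀ f : C(MarkovShift A, ℂ), ∃ g, u * M f * star u = M g)
    (hconj' : ∀ f : C(MarkovShift A, ℂ), ∃ g, star u * M f * u = M g)
    (Xu Yu : Set (MarkovShift A)) (hXu : IsClopen Xu) (hYu : IsClopen Yu)
    (χX χY : C(MarkovShift A, ℂ))
    (hχX : ∀ x, χX x = Set.indicator Xu (fun _ => (1 : ℂ)) x)
    (hχY : ∀ x, χY x = Set.indicator Yu (fun _ => (1 : ℂ)) x)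
    (hpu : star u * u = M χX) (hqu : u * star u = M χY)
    (h : Xu ≃ₜ Yu)
    (hh : ∀ g g' : C(MarkovShift A, ℂ),
      (∀ x ∉ Xu, g x = 0) → (∀ y ∉ Yu, g' y = 0) →
      (∀ y : Yu, g' y = g (h.symm y)) →
      u * M g * star u = M g') :
    ∃ k : ℕ, ∀ (x : MarkovShift A) (hx : x ∈ Xu),
      (mshift A)^[k] (h ⟨x, hx⟩ : MarkovShift A) = (mshift A)^[k] x := by
  classical
  -- Pick a finite algebraic approximant `F` of `u` within distance 1/2.
  have humem' : u ∈ closure ((StarAlgebra.adjoin ℂ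
      { a | ∃ (n : ℕ) (μ ν : ℕ → Fin N), IsAdmissible A n μ ∧ IsAdmissible A n ν ∧
          a = wordOp A T n μ * star (wordOp A T n ν) } :
      StarSubalgebra ℂ (MSHilbert A →L[ℂ] MSHilbert A)) : Set _) := humem
  obtain ⟨F, hFmem, hFdist⟩ := Metric.mem_closure_iff.mp humem' (1 / 2) (by norm_num)
  obtain ⟨k, hQ⟩ := exists_Qp_of_mem_adjoin hT hFmem
  refine ⟨k, ?_⟩
  intro x hx
  by_contra hne
  set xp : Xu := ⟨x, hx⟩ with hxp
  set yv : MarkovShift A := (h xp : MarkovShift A) with hyv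
  -- `(star u * u) e_x = e_x`.
  have hMχX : M χX (basisVec A x) = basisVec A x := by
    rw [hM χX x, hχX x, Set.indicator_of_mem hx, one_smul]
  have hpu_x : (star u) (u (basisVec A x)) = basisVec A x := by
    have e1 : (star u) (u (basisVec A x)) = (star u * u) (basisVec A x) := rfl
    rw [e1, hpu, hMχX]
  -- coordinates of `u e_x` vanish away from `yv = h x`.
  have hvanish : ∀ z : MarkovShift A, z ≠ yv → (u (basisVec A x)) z = 0 := by
    intro z hz
    obtain ⟨g, g', hg0, hg'0, hgg', hgx, hg'z⟩ :
        ∃ g g' : C(MarkovShift A, ℂ), (∀ w ∉ Xu, g w = 0) ∧ (∀ w ∉ Yu, g' w = 0) ∧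
          (∀ w : Yu, g' w = g (h.symm w)) ∧ g x = 1 ∧ g' z = 0 := by
      by_cases hzY : z ∈ Yu
      · obtain ⟨n, hn⟩ : ∃ n, z.1 n ≠ yv.1 n := by
          by_contra hq
          push_neg at hq
          exact hz (Subtype.ext (funext hq))
        set W : Set (MarkovShift A) := {w | w.1 n = yv.1 n} with hW
        have hWclopen : IsClopen W := by
          have hcont : Continuous fun w : MarkovShift A => w.1 n :=
            (continuous_apply n).comp continuous_subtype_val
          have eW : W = (fun w : MarkovShift A => w.1 n) ⁻¹' {yv.1 n} := rfl
          rw [eW]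
          exact (isClopen_discrete _).preimage hcont
        set S : Set Xu := (⇑h) ⁻¹' (Subtype.val ⁻¹' W) with hS
        have hSclopen : IsClopen S :=
          (hWclopen.preimage continuous_subtype_val).preimage h.continuous
        set E : Set (MarkovShift A) := Subtype.val '' S with hE
        have hEclopen : IsClopen E :=
          ⟨hXu.1.isClosedEmbedding_subtypeVal.isClosedMap _ hSclopen.1,
            hXu.2.isOpenMap_subtype_val _ hSclopen.2⟩
        have hEX : E ⊆ Xu := by
          rintro w ⟨s, -, rfl⟩
          exact s.2
        have hmemE : ∀ w : Yu, ((h.symm w : Xu) : MarkovShift A) ∈ E ↔ (w : MarkovShift A) ∈ W := by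
          intro w
          rw [hE, Subtype.val_injective.mem_set_image, hS, Set.mem_preimage, Set.mem_preimage,
            h.apply_symm_apply]
        refine ⟨⟨E.indicator fun _ => 1, indicator_cont hEclopen⟩,
          ⟨(W ∩ Yu).indicator fun _ => 1, indicator_cont (hWclopen.inter hYu)⟩, ?_, ?_, ?_, ?_, ?_⟩
        · intro w hw
          show E.indicator (fun _ => (1 : ℂ)) w = 0
          exact Set.indicator_of_notMem (fun hwE => hw (hEX hwE)) _
        · intro w hw
          show (W ∩ Yu).indicator (fun _ => (1 : ℂ)) w = 0
          exact Set.indicator_of_notMem (fun hw' : w ∈ W ∩ Yu => hw hw'.2) _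
        · intro w
          show (W ∩ Yu).indicator (fun _ => (1 : ℂ)) (w : MarkovShift A)
              = E.indicator (fun _ => (1 : ℂ)) ((h.symm w : Xu) : MarkovShift A)
          by_cases hwW : (w : MarkovShift A) ∈ W
          · rw [Set.indicator_of_mem (Set.mem_inter hwW w.2), Set.indicator_of_mem ((hmemE w).mpr hwW)]
          · rw [Set.indicator_of_notMem (fun hq => hwW hq.1),
              Set.indicator_of_notMem (fun hq => hwW ((hmemE w).mp hq))]
        · show E.indicator (fun _ => (1 : ℂ)) x = 1
          have hxpS : xp ∈ S := by
            show ((h xp : Yu) : MarkovShift A) ∈ W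
            rw [← hyv]
            exact rfl
          exact Set.indicator_of_mem (Set.mem_image_of_mem _ hxpS) _
        · show (W ∩ Yu).indicator (fun _ => (1 : ℂ)) z = 0
          exact Set.indicator_of_notMem (fun hq => hn hq.1) _
      · refine ⟨χX, χY, ?_, ?_, ?_, ?_, ?_⟩
        · intro w hw
          rw [hχX w]
          exact Set.indicator_of_notMem hw _
        · intro w hw
          rw [hχY w]
          exact Set.indicator_of_notMem hw _
        · intro w
          rw [hχY w.1, hχX, Set.indicator_of_mem w.2, Set.indicator_of_mem (h.symm w).2]
        · rw [hχX x]
          exact Set.indicator_of_mem hx _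
        · rw [hχY z]
          exact Set.indicator_of_notMem hzY _
    have hop := hh g g' hg0 hg'0 hgg'
    have hLHS : (u * M g * star u) (u (basisVec A x)) = u (basisVec A x) := by
      have e1 : (u * M g * star u) (u (basisVec A x))
          = u (M g ((star u) (u (basisVec A x)))) := rfl
      rw [e1, hpu_x, hM g x, hgx, one_smul]
    have hRHS : ((M g') (u (basisVec A x))) z = 0 := by
      rw [multOp_apply hM g' _ z, hg'z, zero_mul]
    calc (u (basisVec A x)) z
        = ((u * M g * star u) (u (basisVec A x))) z := by rw [hLHS]
      _ = ((M g') (u (basisVec A x))) z := by rw [hop]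
      _ = 0 := hRHS
  set c : ℂ := (u (basisVec A x)) yv with hc
  have huex : u (basisVec A x) = c • basisVec A yv := by
    apply lp.ext
    funext w
    rw [lp.coeFn_smul, Pi.smul_apply]
    by_cases hw : w = yv
    · subst hw
      rw [basisVec_self, smul_eq_mul, mul_one]
    · rw [hvanish w hw, basisVec_ne hw, smul_zero]
  have hinner_basis : ∀ w : MarkovShift A,
      (inner (𝕜 := ℂ) (basisVec A w) (basisVec A w)) = 1 := by
    intro w
    letI : DecidableEq (MarkovShift A) := Classical.decEq _
    rw [show basisVec A w = lp.single 2 w (1 : ℂ) from rfl, lp.inner_single_left,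
      RCLike.inner_apply, _root_.map_one, mul_one,
      lp.single_apply_self (E := fun _ : MarkovShift A => ℂ)]
  have hinner : (inner (𝕜 := ℂ) (u (basisVec A x)) (u (basisVec A x))) = 1 := by
    have h2 := ContinuousLinearMap.adjoint_inner_left u (basisVec A x) (u (basisVec A x))
    rw [← ContinuousLinearMap.star_eq_adjoint, hpu_x] at h2
    rw [← h2]
    exact hinner_basis x
  have hcc : (starRingEnd ℂ) c * c = 1 := by
    rw [huex, inner_smul_left, inner_smul_right, hinner_basis yv, mul_one] at hinner
    exact hinner
  have hnormc : ‖c‖ = 1 := by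
    have h1 : ‖c‖ ^ 2 = 1 := by
      have h2 : ‖(starRingEnd ℂ) c * c‖ = ‖(1 : ℂ)‖ := by rw [hcc]
      rw [norm_mul, norm_one, Complex.norm_conj] at h2
      rw [sq]
      exact h2
    nlinarith [norm_nonneg c]
  have hF0 : (F (basisVec A x)) yv = 0 := by
    by_contra hF0
    exact hne (hQ x yv hF0)
  have hdiff : ((u - F) (basisVec A x)) yv = c := by
    rw [ContinuousLinearMap.sub_apply, lp.coeFn_sub, Pi.sub_apply, hF0, sub_zero, hc]
  have hbn : ‖basisVec A x‖ = 1 := by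
    have h2 := inner_self_eq_norm_sq (𝕜 := ℂ) (basisVec A x)
    rw [hinner_basis x] at h2
    simp only [RCLike.one_re] at h2
    nlinarith [norm_nonneg (basisVec A x)]
  have hle : (1 : ℝ) ≤ ‖u - F‖ := by
    calc (1 : ℝ) = ‖c‖ := hnormc.symm
      _ = ‖((u - F) (basisVec A x)) yv‖ := by rw [hdiff]
      _ ≤ ‖(u - F) (basisVec A x)‖ := lp.norm_apply_le_norm (by norm_num) _ _
      _ ≤ ‖u - F‖ * ‖basisVec A x‖ := ContinuousLinearMap.le_opNorm _ _
      _ = ‖u - F‖ := by rw [hbn, mul_one]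
  rw [dist_eq_norm] at hFdist
  linarith
end
end

section
/- Assume A, B and their transposes A^t, B^t all satisfy Cuntz–Krieger condition (I). If there exists a homeomorphism h : X_A → X_B such that h ∘ [σ_A]_c ∘ h^{-1} = [σ_B]_c, then (X_A, σ_A) and (X_B, σ_B) are topologically orbit equivalent. -/
open Matrix

/-- `(X_A, σ_A)` and `(X_B, σ_B)` are topologically orbit equivalent: there is a
homeomorphism `h : X_A → X_B` mapping orbits onto orbits, with continuous orbit
cocycles for `h` and for `h⁻¹`. -/
def TopOrbitEquiv {N N' : ℕ} (A : Matrix (Fin N) (Fin N) ℕ)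
    (B : Matrix (Fin N') (Fin N') ℕ) : Prop :=
  ∃ h : MarkovShift A ≃ₜ MarkovShift B,
    (∀ x, h '' orb A x = orb B (h x)) ∧
    (∃ k₁ l₁ : MarkovShift A → ℕ, Continuous k₁ ∧ Continuous l₁ ∧
      ∀ x, (mshift B)^[k₁ x] (h (mshift A x)) = (mshift B)^[l₁ x] (h x)) ∧
    (∃ k₂ l₂ : MarkovShift B → ℕ, Continuous k₂ ∧ Continuous l₂ ∧
      ∀ y, (mshift A)^[k₂ y] (h.symm (mshift B y)) = (mshift A)^[l₂ y] (h.symm y))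

/- ------------------------------------------------------------------ -/
/- Auxiliary development                                               -/
/- ------------------------------------------------------------------ -/

namespace CKAux

attribute [local instance] Classical.propDecidable

variable {N : ℕ} (A : Matrix (Fin N) (Fin N) ℕ)

lemma continuous_coord (n : ℕ) : Continuous (fun z : MarkovShift A => z.1 n) :=
  (continuous_apply n).comp continuous_subtype_val

instance : CompactSpace (MarkovShift A) := by
  have : IsClosed {x : ℕ → Fin N | ∀ n, A (x n) (x (n + 1)) = 1} := by
    have h : {x : ℕ → Fin N | ∀ n, A (x n) (x (n + 1)) = 1} =
        ⋂ n, {x : ℕ → Fin N | A (x n) (x (n + 1)) = 1} := by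
      ext; simp [Set.mem_iInter]
    rw [h]
    refine isClosed_iInter fun n => ?_
    have h1 : Continuous (fun x : ℕ → Fin N => (x n, x (n+1))) :=
      (continuous_apply n).prodMk (continuous_apply (n+1))
    have h2 : Continuous (fun p : Fin N × Fin N => A p.1 p.2) := continuous_of_discreteTopology
    exact IsClosed.preimage (h2.comp h1) isClosed_singleton
  exact isCompact_iff_compactSpace.mp this.isCompact

lemma continuous_mshift : Continuous (mshift A) :=
  Continuous.subtype_mk (continuous_pi fun n => continuous_coord A (n+1)) _

lemma mshift_coord (z : MarkovShift A) (n : ℕ) : (mshift A z).1 n = z.1 (n+1) := rfl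

/-- total "prepend letter `a`" map: prepends when admissible, else identity. -/
noncomputable def pushTot (a : Fin N) (z : MarkovShift A) : MarkovShift A :=
  if h : A a (z.1 0) = 1 then
    ⟨fun n => Nat.rec a (fun m _ => z.1 m) n, by
      intro n
      cases n with
      | zero => exact h
      | succ m => exact z.2 m⟩
  else z

lemma pushTot_coord_zero (a : Fin N) (z : MarkovShift A) (h : A a (z.1 0) = 1) :
    (pushTot A a z).1 0 = a := by simp [pushTot, h]

lemma pushTot_coord_succ (a : Fin N) (z : MarkovShift A) (h : A a (z.1 0) = 1) (n : ℕ) :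
    (pushTot A a z).1 (n+1) = z.1 n := by simp [pushTot, h]

lemma mshift_pushTot (a : Fin N) (z : MarkovShift A) (h : A a (z.1 0) = 1) :
    mshift A (pushTot A a z) = z := by
  apply Subtype.ext; funext n
  simp [mshift_coord, pushTot_coord_succ A a z h]

lemma pushTot_mshift (a : Fin N) (z : MarkovShift A) (h0 : z.1 0 = a) :
    pushTot A a (mshift A z) = z := by
  have h : A a ((mshift A z).1 0) = 1 := by
    rw [mshift_coord, ← h0]; exact z.2 0
  apply Subtype.ext; funext n
  cases n with
  | zero => rw [pushTot_coord_zero A a _ h, h0]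
  | succ m => rw [pushTot_coord_succ A a _ h, mshift_coord]

lemma continuous_pushTot (a : Fin N) : Continuous (pushTot A a) := by
  have hco : IsClopen {z : MarkovShift A | A a (z.1 0) = 1} := by
    have hc : Continuous (fun z : MarkovShift A => A a (z.1 0)) :=
      (continuous_of_discreteTopology (α := Fin N) (f := fun c => A a c)).comp
        (continuous_coord A 0)
    have h1 : IsClosed ((fun z : MarkovShift A => A a (z.1 0)) ⁻¹' {1}) :=
      IsClosed.preimage hc isClosed_singleton
    have h2 : IsOpen ((fun z : MarkovShift A => A a (z.1 0)) ⁻¹' {1}) :=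
      IsOpen.preimage hc (isOpen_discrete _)
    exact ⟨h1, h2⟩
  have hcont : Continuous fun z : MarkovShift A =>
      (if A a (z.1 0) = 1 then (fun n => Nat.rec a (fun m _ => z.1 m) n : ℕ → Fin N)
       else z.1) := by
    refine Continuous.if ?_ ?_ ?_
    · intro z hz; rw [hco.frontier_eq] at hz; exact absurd hz (Set.notMem_empty z)
    · refine continuous_pi fun n => ?_
      cases n with
      | zero => exact continuous_const
      | succ m => exact continuous_coord A m
    · exact continuous_subtype_val
  have hval : ∀ z : MarkovShift A, (pushTot A a z).1 =
      (if A a (z.1 0) = 1 then (fun n => Nat.rec a (fun m _ => z.1 m) n : ℕ → Fin N)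
       else z.1) := by
    intro z; by_cases h : A a (z.1 0) = 1 <;> simp [pushTot, h]
  apply continuous_induced_rng.2
  convert hcont using 1
  funext z
  exact hval z

lemma isClopen_coord (n : ℕ) (c : Fin N) : IsClopen {z : MarkovShift A | z.1 n = c} := by
  have hc := continuous_coord A n
  have h1 : IsClosed ((fun z : MarkovShift A => z.1 n) ⁻¹' {c}) :=
    IsClosed.preimage hc isClosed_singleton
  have h2 : IsOpen ((fun z : MarkovShift A => z.1 n) ⁻¹' {c}) :=
    IsOpen.preimage hc (isOpen_discrete _)
  exact ⟨h1, h2⟩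

lemma isClopen_cyl (m : ℕ) (w : ℕ → Fin N) :
    IsClopen {z : MarkovShift A | ∀ j ≤ m, z.1 j = w j} := by
  have h : {z : MarkovShift A | ∀ j ≤ m, z.1 j = w j} =
      ⋂ j ∈ Finset.range (m+1), {z : MarkovShift A | z.1 j = w j} := by
    ext z
    simp only [Set.mem_iInter, Set.mem_setOf_eq, Finset.mem_range, Nat.lt_succ_iff]
  rw [h]
  exact isClopen_biInter_finset fun j _ => isClopen_coord A j (w j)

/-- If `A i i = 1` and `Aᵀ` satisfies condition (I), then `i` has a predecessor `b ≠ i`. -/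
lemma exists_pred (i : Fin N) (hii : A i i = 1) (hIt : ConditionI Aᵀ) :
    ∃ b : Fin N, b ≠ i ∧ A b i = 1 := by
  by_contra hno
  push_neg at hno
  have hti : Aᵀ i i = 1 := hii
  set ξ : MarkovShift Aᵀ := ⟨fun _ => i, fun _ => hti⟩ with hξ
  apply hIt ξ
  have h : ({ξ} : Set (MarkovShift Aᵀ)) = {y : MarkovShift Aᵀ | y.1 0 = i} := by
    ext y
    simp only [Set.mem_singleton_iff, Set.mem_setOf_eq]
    constructor
    · rintro rfl; rfl
    · intro h0
      have hall : ∀ n, y.1 n = i := by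
        intro n
        induction n with
        | zero => exact h0
        | succ m ih =>
          have hy := y.2 m
          rw [ih] at hy
          by_contra hne
          exact absurd hy (hno _ hne)
      apply Subtype.ext; funext n; exact hall n
  rw [h]
  exact (isClopen_coord Aᵀ 0 i).2

/-! ### Local realization of the shift by topological full group elements -/

/-- Local realization: every point has a clopen neighborhood on which the shift agrees
with some element of the topological full group. -/
lemma local_real (hIt : ConditionI Aᵀ) (x : MarkovShift A) :
    ∃ U : Set (MarkovShift A), IsClopen U ∧ x ∈ U ∧
      ∃ τ : MarkovShift A ≃ₜ MarkovShift A, τ ∈ topFullGroup A ∧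
        ∀ z ∈ U, τ z = mshift A z := by
  by_cases hconst : ∀ n, x.1 n = x.1 0
  · -- Case 2: x is the constant sequence i^∞
    set i := x.1 0 with hi
    have hii : A i i = 1 := by
      have := x.2 0
      rwa [hconst 1] at this
    obtain ⟨b, hbne, hbi⟩ := exists_pred A i hii hIt
    -- the map
    set f : MarkovShift A → MarkovShift A := fun z =>
      if z.1 0 = i ∧ z.1 1 = i then mshift A z
      else if z.1 0 = i then pushTot A b z
      else if z.1 0 = b ∧ z.1 1 = i then pushTot A b (pushTot A i (mshift A z))
      else z with hf
    set g : MarkovShift A → MarkovShift A := fun w =>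
      if w.1 0 = i then pushTot A i w
      else if w.1 0 = b ∧ w.1 1 = i ∧ w.1 2 ≠ i then mshift A w
      else if w.1 0 = b ∧ w.1 1 = i ∧ w.1 2 = i then pushTot A b (mshift A (mshift A w))
      else w with hg
    have hfap : ∀ z : MarkovShift A, f z =
      (if z.1 0 = i ∧ z.1 1 = i then mshift A z
      else if z.1 0 = i then pushTot A b z
      else if z.1 0 = b ∧ z.1 1 = i then pushTot A b (pushTot A i (mshift A z))
      else z) := fun z => rfl
    have hgap : ∀ w : MarkovShift A, g w =
      (if w.1 0 = i then pushTot A i w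
      else if w.1 0 = b ∧ w.1 1 = i ∧ w.1 2 ≠ i then mshift A w
      else if w.1 0 = b ∧ w.1 1 = i ∧ w.1 2 = i then pushTot A b (mshift A (mshift A w))
      else w) := fun w => rfl
    have c1 : IsClopen {z : MarkovShift A | z.1 0 = i ∧ z.1 1 = i} := by
      have h : {z : MarkovShift A | z.1 0 = i ∧ z.1 1 = i} =
          {z : MarkovShift A | z.1 0 = i} ∩ {z : MarkovShift A | z.1 1 = i} := rfl
      rw [h]; exact (isClopen_coord A 0 i).inter (isClopen_coord A 1 i)
    have c2 : IsClopen {z : MarkovShift A | z.1 0 = i} := isClopen_coord A 0 i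
    have c3 : IsClopen {z : MarkovShift A | z.1 0 = b ∧ z.1 1 = i} := by
      have h : {z : MarkovShift A | z.1 0 = b ∧ z.1 1 = i} =
          {z : MarkovShift A | z.1 0 = b} ∩ {z : MarkovShift A | z.1 1 = i} := rfl
      rw [h]; exact (isClopen_coord A 0 b).inter (isClopen_coord A 1 i)
    have hleft : ∀ z, g (f z) = z := by
      intro z
      by_cases h1 : z.1 0 = i ∧ z.1 1 = i
      · -- P1
        have hfz : f z = mshift A z := by rw [hfap]; simp only [if_pos h1]
        have h0 : (mshift A z).1 0 = i := by rw [mshift_coord]; exact h1.2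
        rw [hfz, hgap, if_pos h0]
        exact pushTot_mshift A i z h1.1
      · by_cases h2 : z.1 0 = i
        · -- P2 : z0 = i, z1 ≠ i
          have hz1 : z.1 1 ≠ i := fun hcc => h1 ⟨h2, hcc⟩
          have hadm : A b (z.1 0) = 1 := by rw [h2]; exact hbi
          have hfz : f z = pushTot A b z := by
            rw [hfap]; simp only [if_neg h1, if_pos h2]
          set w := pushTot A b z with hw
          have hw0 : w.1 0 = b := pushTot_coord_zero A b z hadm
          have hw1 : w.1 1 = i := by rw [hw, pushTot_coord_succ A b z hadm 0]; exact h2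
          have hw2 : w.1 2 ≠ i := by rw [hw, pushTot_coord_succ A b z hadm 1]; exact hz1
          rw [hfz, hgap,
            if_neg (show ¬ w.1 0 = i by rw [hw0]; exact hbne), if_pos ⟨hw0, hw1, hw2⟩]
          exact mshift_pushTot A b z hadm
        · by_cases h3 : z.1 0 = b ∧ z.1 1 = i
          · -- P3
            have hadmi : A i ((mshift A z).1 0) = 1 := by
              rw [mshift_coord, h3.2]; exact hii
            set u := pushTot A i (mshift A z) with hu
            have hu0 : u.1 0 = i := pushTot_coord_zero A i _ hadmi
            have hu1 : u.1 1 = (mshift A z).1 0 := pushTot_coord_succ A i _ hadmi 0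
            have hadmb : A b (u.1 0) = 1 := by rw [hu0]; exact hbi
            set w := pushTot A b u with hw
            have hw0 : w.1 0 = b := pushTot_coord_zero A b u hadmb
            have hw1 : w.1 1 = i := by rw [hw, pushTot_coord_succ A b u hadmb 0]; exact hu0
            have hw2 : w.1 2 = i := by
              rw [hw, pushTot_coord_succ A b u hadmb 1, hu1, mshift_coord]; exact h3.2
            have hfz : f z = w := by
              rw [hfap]; simp only [if_neg h1, if_neg h2, if_pos h3]; rw [hw, hu]
            rw [hfz, hgap,
                if_neg (show ¬ w.1 0 = i by rw [hw0]; exact hbne),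
                if_neg (show ¬ (w.1 0 = b ∧ w.1 1 = i ∧ w.1 2 ≠ i) by
                  rintro ⟨-, -, hcc⟩; exact hcc hw2), if_pos ⟨hw0, hw1, hw2⟩]
            have e1 : mshift A w = u := mshift_pushTot A b u hadmb
            have e2 : mshift A u = mshift A z := mshift_pushTot A i _ hadmi
            rw [e1, e2]
            exact pushTot_mshift A b z h3.1
          · -- identity part
            have hfz : f z = z := by
              rw [hfap]; simp only [if_neg h1, if_neg h2, if_neg h3]
            rw [hfz, hgap,
                if_neg h2,
                if_neg (show ¬ (z.1 0 = b ∧ z.1 1 = i ∧ z.1 2 ≠ i) by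
                  rintro ⟨ha, hb', -⟩; exact h3 ⟨ha, hb'⟩),
                if_neg (show ¬ (z.1 0 = b ∧ z.1 1 = i ∧ z.1 2 = i) by
                  rintro ⟨ha, hb', -⟩; exact h3 ⟨ha, hb'⟩)]
    have hright : ∀ w, f (g w) = w := by
      intro w
      by_cases h1 : w.1 0 = i
      · have hadmi : A i (w.1 0) = 1 := by rw [h1]; exact hii
        have hgw : g w = pushTot A i w := by rw [hgap]; simp only [if_pos h1]
        set z := pushTot A i w with hz
        have hz0 : z.1 0 = i := pushTot_coord_zero A i w hadmi
        have hz1 : z.1 1 = i := by rw [hz, pushTot_coord_succ A i w hadmi 0]; exact h1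
        rw [hgw, hfap, if_pos ⟨hz0, hz1⟩]
        exact mshift_pushTot A i w hadmi
      · by_cases h2 : w.1 0 = b ∧ w.1 1 = i ∧ w.1 2 ≠ i
        · have hgw : g w = mshift A w := by rw [hgap]; simp only [if_neg h1, if_pos h2]
          set z := mshift A w with hz
          have hz0 : z.1 0 = i := by rw [hz, mshift_coord]; exact h2.2.1
          have hz1 : z.1 1 ≠ i := by rw [hz, mshift_coord]; exact h2.2.2
          rw [hgw, hfap,
              if_neg (show ¬ ((mshift A w).1 0 = i ∧ (mshift A w).1 1 = i) by
                rintro ⟨-, hcc⟩; exact hz1 hcc), if_pos hz0]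
          exact pushTot_mshift A b w h2.1
        · by_cases h3 : w.1 0 = b ∧ w.1 1 = i ∧ w.1 2 = i
          · have hadmb : A b ((mshift A (mshift A w)).1 0) = 1 := by
              rw [mshift_coord, mshift_coord, h3.2.2]; exact hbi
            have hgw : g w = pushTot A b (mshift A (mshift A w)) := by
              rw [hgap]; simp only [if_neg h1, if_neg h2, if_pos h3]
            set z := pushTot A b (mshift A (mshift A w)) with hz
            have hz0 : z.1 0 = b := pushTot_coord_zero A b _ hadmb
            have hz1 : z.1 1 = i := by
              rw [hz, pushTot_coord_succ A b _ hadmb 0, mshift_coord, mshift_coord]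
              exact h3.2.2
            rw [hgw, hfap,
                if_neg (show ¬ (z.1 0 = i ∧ z.1 1 = i) by
                  rintro ⟨hcc, -⟩; rw [hz0] at hcc; exact hbne hcc),
                if_neg (show ¬ z.1 0 = i by intro hcc; rw [hz0] at hcc; exact hbne hcc),
                if_pos ⟨hz0, hz1⟩]
            have e1 : mshift A z = mshift A (mshift A w) := mshift_pushTot A b _ hadmb
            have e2 : pushTot A i (mshift A (mshift A w)) = mshift A w := by
              apply pushTot_mshift
              rw [mshift_coord]; exact h3.2.1
            rw [e1, e2]
            exact pushTot_mshift A b w h3.1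
          · have hgw : g w = w := by
              rw [hg]; simp only [if_neg h1, if_neg h2, if_neg h3]
            have hnb : ¬ (w.1 0 = b ∧ w.1 1 = i) := by
              rintro ⟨ha, hb'⟩
              by_cases hc : w.1 2 = i
              · exact h3 ⟨ha, hb', hc⟩
              · exact h2 ⟨ha, hb', hc⟩
            rw [hgw, hfap,
                if_neg (show ¬ (w.1 0 = i ∧ w.1 1 = i) by rintro ⟨hcc, -⟩; exact h1 hcc),
                if_neg h1, if_neg hnb]
    -- continuity of f
    have hcont : Continuous f := by
      rw [hf]
      refine Continuous.if ?_ (continuous_mshift A) ?_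
      · intro z hz; rw [c1.frontier_eq] at hz; exact absurd hz (Set.notMem_empty z)
      refine Continuous.if ?_ (continuous_pushTot A b) ?_
      · intro z hz; rw [c2.frontier_eq] at hz; exact absurd hz (Set.notMem_empty z)
      refine Continuous.if ?_ ?_ continuous_id
      · intro z hz; rw [c3.frontier_eq] at hz; exact absurd hz (Set.notMem_empty z)
      · exact (continuous_pushTot A b).comp
          ((continuous_pushTot A i).comp (continuous_mshift A))
    set eqv : MarkovShift A ≃ MarkovShift A :=
      ⟨f, g, hleft, hright⟩ with heqv
    set τ : MarkovShift A ≃ₜ MarkovShift A := Continuous.homeoOfEquivCompactToT2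
      (f := eqv) hcont with hτ
    have hτap : ∀ z, τ z = f z := fun z => rfl
    -- cocycles
    have hcoc : ∀ z, ∃ p q : ℕ, p ≤ 2 ∧ q ≤ 1 ∧ (mshift A)^[p] (f z) = (mshift A)^[q] z ∧
        ((z.1 0 = i ∧ z.1 1 = i) → (p = 0 ∧ q = 1)) := by
      intro z
      by_cases h1 : z.1 0 = i ∧ z.1 1 = i
      · refine ⟨0, 1, by omega, le_refl _, ?_, fun _ => ⟨rfl, rfl⟩⟩
        have hfz : f z = mshift A z := by rw [hfap]; simp only [if_pos h1]
        simp [hfz]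
      · by_cases h2 : z.1 0 = i
        · have hadm : A b (z.1 0) = 1 := by rw [h2]; exact hbi
          have hfz : f z = pushTot A b z := by rw [hfap]; simp only [if_neg h1, if_pos h2]
          refine ⟨1, 0, by omega, by omega, ?_, fun hc => absurd hc h1⟩
          simp only [Function.iterate_one, Function.iterate_zero, id_eq, hfz]
          exact mshift_pushTot A b z hadm
        · by_cases h3 : z.1 0 = b ∧ z.1 1 = i
          · have hadmi : A i ((mshift A z).1 0) = 1 := by
              rw [mshift_coord, h3.2]; exact hii
            have hadmb : A b ((pushTot A i (mshift A z)).1 0) = 1 := by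
              rw [pushTot_coord_zero A i _ hadmi]; exact hbi
            have hfz : f z = pushTot A b (pushTot A i (mshift A z)) := by
              rw [hfap]; simp only [if_neg h1, if_neg h2, if_pos h3]
            refine ⟨2, 1, le_refl _, le_refl _, ?_, fun hc => absurd hc h1⟩
            have e2 : (mshift A)^[2] (f z) = mshift A (mshift A (f z)) := by
              rw [show (2:ℕ) = 1 + 1 from rfl, Function.iterate_add_apply]
              simp
            rw [e2, hfz, mshift_pushTot A b _ hadmb, mshift_pushTot A i _ hadmi]
            simp
          · have hfz : f z = z := by
              rw [hf]; simp only [if_neg h1, if_neg h2, if_neg h3]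
            exact ⟨0, 0, by omega, by omega, by simp [hfz], fun hc => absurd hc h1⟩
    have hmem : τ ∈ topFullGroup A := by
      constructor
      · intro z
        obtain ⟨p, q, -, -, hpq, -⟩ := hcoc z
        exact ⟨p, q, by rw [hτap]; exact hpq⟩
      · set kf : MarkovShift A → ℕ := fun z =>
          if z.1 0 = i ∧ z.1 1 = i then 0
          else if z.1 0 = i then 1
          else if z.1 0 = b ∧ z.1 1 = i then 2 else 0 with hkf
        set lf : MarkovShift A → ℕ := fun z =>
          if z.1 0 = i ∧ z.1 1 = i then 1
          else if z.1 0 = i then 0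
          else if z.1 0 = b ∧ z.1 1 = i then 1 else 0 with hlf
        have hkfap : ∀ z : MarkovShift A, kf z =
          (if z.1 0 = i ∧ z.1 1 = i then 0
          else if z.1 0 = i then 1
          else if z.1 0 = b ∧ z.1 1 = i then 2 else 0) := fun _ => rfl
        have hlfap : ∀ z : MarkovShift A, lf z =
          (if z.1 0 = i ∧ z.1 1 = i then 1
          else if z.1 0 = i then 0
          else if z.1 0 = b ∧ z.1 1 = i then 1 else 0) := fun _ => rfl
        have hkc : Continuous kf := by
          rw [hkf]
          refine Continuous.if ?_ continuous_const ?_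
          · intro z hz; rw [c1.frontier_eq] at hz; exact absurd hz (Set.notMem_empty z)
          refine Continuous.if ?_ continuous_const ?_
          · intro z hz; rw [c2.frontier_eq] at hz; exact absurd hz (Set.notMem_empty z)
          refine Continuous.if ?_ continuous_const continuous_const
          · intro z hz; rw [c3.frontier_eq] at hz; exact absurd hz (Set.notMem_empty z)
        have hlc : Continuous lf := by
          rw [hlf]
          refine Continuous.if ?_ continuous_const ?_
          · intro z hz; rw [c1.frontier_eq] at hz; exact absurd hz (Set.notMem_empty z)
          refine Continuous.if ?_ continuous_const ?_
          · intro z hz; rw [c2.frontier_eq] at hz; exact absurd hz (Set.notMem_empty z)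
          refine Continuous.if ?_ continuous_const continuous_const
          · intro z hz; rw [c3.frontier_eq] at hz; exact absurd hz (Set.notMem_empty z)
        refine ⟨kf, lf, hkc, hlc, ?_⟩
        intro z
        rw [hτap]
        by_cases h1 : z.1 0 = i ∧ z.1 1 = i
        · rw [hkfap, hlfap, if_pos h1, if_pos h1]
          have hfz : f z = mshift A z := by rw [hfap]; simp only [if_pos h1]
          simp [hfz]
        · by_cases h2 : z.1 0 = i
          · rw [hkfap, hlfap, if_neg h1, if_neg h1, if_pos h2, if_pos h2]
            have hadm : A b (z.1 0) = 1 := by rw [h2]; exact hbi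
            have hfz : f z = pushTot A b z := by
              rw [hfap]; simp only [if_neg h1, if_pos h2]
            simp only [Function.iterate_one, Function.iterate_zero, id_eq, hfz]
            exact mshift_pushTot A b z hadm
          · by_cases h3 : z.1 0 = b ∧ z.1 1 = i
            · rw [hkfap, hlfap, if_neg h1, if_neg h1, if_neg h2, if_neg h2,
                if_pos h3, if_pos h3]
              have hadmi : A i ((mshift A z).1 0) = 1 := by
                rw [mshift_coord, h3.2]; exact hii
              have hadmb : A b ((pushTot A i (mshift A z)).1 0) = 1 := by
                rw [pushTot_coord_zero A i _ hadmi]; exact hbi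
              have hfz : f z = pushTot A b (pushTot A i (mshift A z)) := by
                rw [hfap]; simp only [if_neg h1, if_neg h2, if_pos h3]
              have e2 : (mshift A)^[2] (f z) = mshift A (mshift A (f z)) := by
                rw [show (2:ℕ) = 1 + 1 from rfl, Function.iterate_add_apply]
                simp
              rw [e2, hfz, mshift_pushTot A b _ hadmb, mshift_pushTot A i _ hadmi]
              simp
            · rw [hkfap, hlfap, if_neg h1, if_neg h1, if_neg h2, if_neg h2,
                if_neg h3, if_neg h3]
              have hfz : f z = z := by
                rw [hfap]; simp only [if_neg h1, if_neg h2, if_neg h3]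
              simp [hfz]
    refine ⟨{z : MarkovShift A | z.1 0 = i ∧ z.1 1 = i}, ?_, ⟨rfl, hconst 1⟩, τ, hmem, ?_⟩
    · have : {z : MarkovShift A | z.1 0 = i ∧ z.1 1 = i} =
          {z : MarkovShift A | z.1 0 = i} ∩ {z : MarkovShift A | z.1 1 = i} := rfl
      rw [this]; exact (isClopen_coord A 0 i).inter (isClopen_coord A 1 i)
    · intro z hz
      rw [hτap, hfap]
      exact if_pos hz
  · -- Case 1: x is not constant
    push_neg at hconst
    set m := Nat.find hconst with hm
    have hmne : x.1 m ≠ x.1 0 := Nat.find_spec hconst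
    have hlt : ∀ j, j < m → x.1 j = x.1 0 := by
      intro j hj
      by_contra hne
      exact absurd hmne (by rw [hm]; intro _; exact (Nat.find_min hconst hj) hne)
    have hmpos : 0 < m := by
      rcases Nat.eq_zero_or_pos m with h0 | h0
      · exact absurd (h0 ▸ hmne) (by simp)
      · exact h0
    set f : MarkovShift A → MarkovShift A := fun z =>
      if ∀ j ≤ m, z.1 j = x.1 j then mshift A z
      else if ∀ j < m, z.1 j = x.1 (j+1) then pushTot A (x.1 0) z
      else z with hf
    have hfap : ∀ z : MarkovShift A, f z =
      (if ∀ j ≤ m, z.1 j = x.1 j then mshift A z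
      else if ∀ j < m, z.1 j = x.1 (j+1) then pushTot A (x.1 0) z
      else z) := fun _ => rfl
    have hdisj : ∀ z : MarkovShift A, (∀ j ≤ m, z.1 j = x.1 j) →
        (∀ j < m, z.1 j = x.1 (j+1)) → False := by
      intro z hU hV
      have h1 : z.1 (m-1) = x.1 (m-1) := hU _ (by omega)
      have h2 : z.1 (m-1) = x.1 (m-1+1) := hV _ (by omega)
      have h3 : x.1 (m-1) = x.1 0 := hlt _ (by omega)
      have h4 : m - 1 + 1 = m := by omega
      rw [h4] at h2
      exact hmne (by rw [← h2, h1, h3])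
    have hinv : Function.Involutive f := by
      intro z
      by_cases hU : ∀ j ≤ m, z.1 j = x.1 j
      · have hfz : f z = mshift A z := by rw [hfap]; simp only [if_pos hU]
        have hV' : ∀ j < m, (mshift A z).1 j = x.1 (j+1) := by
          intro j hj; rw [mshift_coord]; exact hU (j+1) (by omega)
        have hnU : ¬ ∀ j ≤ m, (mshift A z).1 j = x.1 j := fun hc => hdisj _ hc hV'
        rw [hfz, hfap, if_neg hnU, if_pos hV']
        exact pushTot_mshift A _ z (hU 0 (by omega))
      · by_cases hV : ∀ j < m, z.1 j = x.1 (j+1)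
        · have hadm : A (x.1 0) (z.1 0) = 1 := by rw [hV 0 hmpos]; exact x.2 0
          have hfz : f z = pushTot A (x.1 0) z := by
            rw [hfap]; simp only [if_neg hU, if_pos hV]
          have hwU : ∀ j ≤ m, (pushTot A (x.1 0) z).1 j = x.1 j := by
            intro j hj
            cases j with
            | zero => rw [pushTot_coord_zero A _ z hadm]
            | succ j' =>
              rw [pushTot_coord_succ A _ z hadm]
              exact hV j' (by omega)
          rw [hfz, hfap, if_pos hwU]
          exact mshift_pushTot A _ z hadm
        · have hfz : f z = z := by rw [hfap]; simp only [if_neg hU, if_neg hV]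
          rw [hfz, hfap, if_neg hU, if_neg hV]
    have cU : IsClopen {z : MarkovShift A | ∀ j ≤ m, z.1 j = x.1 j} :=
      isClopen_cyl A m x.1
    have cV : IsClopen {z : MarkovShift A | ∀ j < m, z.1 j = x.1 (j+1)} := by
      have h : {z : MarkovShift A | ∀ j < m, z.1 j = x.1 (j+1)} =
          {z : MarkovShift A | ∀ j ≤ m - 1, z.1 j = x.1 (j+1)} := by
        ext z
        simp only [Set.mem_setOf_eq]
        constructor
        · intro hz j hj; exact hz j (by omega)
        · intro hz j hj; exact hz j (by omega)
      rw [h]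
      exact isClopen_cyl A (m-1) (fun j => x.1 (j+1))
    have hcont : Continuous f := by
      rw [hf]
      refine Continuous.if ?_ (continuous_mshift A) ?_
      · intro z hz; rw [cU.frontier_eq] at hz; exact absurd hz (Set.notMem_empty z)
      refine Continuous.if ?_ (continuous_pushTot A (x.1 0)) continuous_id
      · intro z hz; rw [cV.frontier_eq] at hz; exact absurd hz (Set.notMem_empty z)
    set τ : MarkovShift A ≃ₜ MarkovShift A := Continuous.homeoOfEquivCompactToT2
      (f := hinv.toPerm f) hcont with hτ
    have hτap : ∀ z, τ z = f z := fun z => rfl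
    have hprop : ∀ z : MarkovShift A, ∃ p q : ℕ,
        (mshift A)^[p] (f z) = (mshift A)^[q] z ∧
        ((∀ j ≤ m, z.1 j = x.1 j) → (p = 0 ∧ q = 1)) := by
      intro z
      by_cases hU : ∀ j ≤ m, z.1 j = x.1 j
      · have hfz : f z = mshift A z := by rw [hfap]; simp only [if_pos hU]
        exact ⟨0, 1, by simp [hfz], fun _ => ⟨rfl, rfl⟩⟩
      · by_cases hV : ∀ j < m, z.1 j = x.1 (j+1)
        · have hadm : A (x.1 0) (z.1 0) = 1 := by rw [hV 0 hmpos]; exact x.2 0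
          have hfz : f z = pushTot A (x.1 0) z := by
            rw [hfap]; simp only [if_neg hU, if_pos hV]
          refine ⟨1, 0, ?_, fun hc => absurd hc hU⟩
          simp only [Function.iterate_one, Function.iterate_zero, id_eq, hfz]
          exact mshift_pushTot A _ z hadm
        · have hfz : f z = z := by rw [hfap]; simp only [if_neg hU, if_neg hV]
          exact ⟨0, 0, by simp [hfz], fun hc => absurd hc hU⟩
    have hmem : τ ∈ topFullGroup A := by
      constructor
      · intro z
        obtain ⟨p, q, hpq, -⟩ := hprop z
        exact ⟨p, q, by rw [hτap]; exact hpq⟩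
      · set kf : MarkovShift A → ℕ := fun z =>
          if ∀ j ≤ m, z.1 j = x.1 j then 0
          else if ∀ j < m, z.1 j = x.1 (j+1) then 1 else 0 with hkf
        set lf : MarkovShift A → ℕ := fun z =>
          if ∀ j ≤ m, z.1 j = x.1 j then 1 else 0 with hlf
        have hkfap : ∀ z : MarkovShift A, kf z =
          (if ∀ j ≤ m, z.1 j = x.1 j then 0
          else if ∀ j < m, z.1 j = x.1 (j+1) then 1 else 0) := fun _ => rfl
        have hlfap : ∀ z : MarkovShift A, lf z =
          (if ∀ j ≤ m, z.1 j = x.1 j then 1 else 0) := fun _ => rfl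
        have hkc : Continuous kf := by
          rw [hkf]
          refine Continuous.if ?_ continuous_const ?_
          · intro z hz; rw [cU.frontier_eq] at hz; exact absurd hz (Set.notMem_empty z)
          refine Continuous.if ?_ continuous_const continuous_const
          · intro z hz; rw [cV.frontier_eq] at hz; exact absurd hz (Set.notMem_empty z)
        have hlc : Continuous lf := by
          rw [hlf]
          refine Continuous.if ?_ continuous_const continuous_const
          · intro z hz; rw [cU.frontier_eq] at hz; exact absurd hz (Set.notMem_empty z)
        refine ⟨kf, lf, hkc, hlc, ?_⟩
        intro z
        rw [hτap]
        by_cases hU : ∀ j ≤ m, z.1 j = x.1 j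
        · rw [hkfap, hlfap, if_pos hU, if_pos hU]
          have hfz : f z = mshift A z := by rw [hfap]; simp only [if_pos hU]
          simp [hfz]
        · by_cases hV : ∀ j < m, z.1 j = x.1 (j+1)
          · rw [hkfap, hlfap, if_neg hU, if_neg hU, if_pos hV]
            have hadm : A (x.1 0) (z.1 0) = 1 := by rw [hV 0 hmpos]; exact x.2 0
            have hfz : f z = pushTot A (x.1 0) z := by
              rw [hfap]; simp only [if_neg hU, if_pos hV]
            simp only [Function.iterate_one, Function.iterate_zero, id_eq, hfz]
            exact mshift_pushTot A _ z hadm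
          · rw [hkfap, hlfap, if_neg hU, if_neg hU, if_neg hV]
            have hfz : f z = z := by rw [hfap]; simp only [if_neg hU, if_neg hV]
            simp [hfz]
    refine ⟨{z : MarkovShift A | ∀ j ≤ m, z.1 j = x.1 j}, cU, fun j _ => rfl, τ, hmem, ?_⟩
    intro z hz
    rw [hτap, hfap]
    exact if_pos hz

/-! ### Gluing continuous cocycles over a compact space -/

lemma glue {X : Type*} [TopologicalSpace X] [CompactSpace X] (P : X → ℕ → ℕ → Prop)
    (H : ∀ z : X, ∃ U : Set X, IsClopen U ∧ z ∈ U ∧ ∃ k l : X → ℕ,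
      Continuous k ∧ Continuous l ∧ ∀ w ∈ U, P w (k w) (l w)) :
    ∃ k l : X → ℕ, Continuous k ∧ Continuous l ∧ ∀ w, P w (k w) (l w) := by
  choose U hUc hUm k l hk hl hP using H
  have hcov : (Set.univ : Set X) ⊆ ⋃ z, U z := fun w _ => Set.mem_iUnion.2 ⟨w, hUm w⟩
  obtain ⟨t, ht⟩ := isCompact_univ.elim_finite_subcover U (fun z => (hUc z).2) hcov
  have main : ∀ s : Finset X, ∃ k' l' : X → ℕ, Continuous k' ∧ Continuous l' ∧
      ∀ w ∈ ⋃ z ∈ s, U z, P w (k' w) (l' w) := by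
    intro s
    induction s using Finset.induction_on with
    | empty => exact ⟨fun _ => 0, fun _ => 0, continuous_const, continuous_const, by simp⟩
    | @insert a s ha ih =>
      obtain ⟨k', l', hk', hl', hP'⟩ := ih
      refine ⟨fun w => if w ∈ U a then k a w else k' w,
              fun w => if w ∈ U a then l a w else l' w, ?_, ?_, ?_⟩
      · refine Continuous.if ?_ (hk a) hk'
        intro z hz; rw [Set.setOf_mem_eq, (hUc a).frontier_eq] at hz
        exact absurd hz (Set.notMem_empty z)
      · refine Continuous.if ?_ (hl a) hl'
        intro z hz; rw [Set.setOf_mem_eq, (hUc a).frontier_eq] at hz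
        exact absurd hz (Set.notMem_empty z)
      · intro w hw
        show P w (if w ∈ U a then k a w else k' w) (if w ∈ U a then l a w else l' w)
        by_cases hwa : w ∈ U a
        · rw [if_pos hwa, if_pos hwa]; exact hP a w hwa
        · rw [if_neg hwa, if_neg hwa]
          apply hP'
          simp only [Set.mem_iUnion, exists_prop] at hw ⊢
          obtain ⟨z, hz, hwz⟩ := hw
          rcases Finset.mem_insert.1 hz with rfl | hzs
          · exact absurd hwz hwa
          · exact ⟨z, hzs, hwz⟩
  obtain ⟨k', l', hk', hl', hP'⟩ := main t
  exact ⟨k', l', hk', hl', fun w => hP' w (ht (Set.mem_univ w))⟩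

/-! ### Orbit lemmas from cocycles -/

lemma iter_coc {α β : Type*} (σa : α → α) (σb : β → β) (f : α → β) (k l : α → ℕ)
    (hco : ∀ z, σb^[k z] (f (σa z)) = σb^[l z] (f z)) :
    ∀ (n : ℕ) (z : α), ∃ p q : ℕ, σb^[p] (f (σa^[n] z)) = σb^[q] (f z) := by
  intro n
  induction n with
  | zero => intro z; exact ⟨0, 0, rfl⟩
  | succ n ih =>
    intro z
    obtain ⟨p, q, hpq⟩ := ih z
    set w := σa^[n] z with hw
    refine ⟨p + k w, l w + q, ?_⟩
    have h1 : σb^[k w] (f (σa w)) = σb^[l w] (f w) := hco w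
    have h2 : σa^[n+1] z = σa w := by rw [hw, Function.iterate_succ_apply' σa n z]
    rw [h2]
    calc σb^[p + k w] (f (σa w)) = σb^[p] (σb^[k w] (f (σa w))) :=
          Function.iterate_add_apply σb p (k w) _
      _ = σb^[p] (σb^[l w] (f w)) := by rw [h1]
      _ = σb^[p + l w] (f w) := (Function.iterate_add_apply σb p (l w) _).symm
      _ = σb^[l w + p] (f w) := by rw [add_comm]
      _ = σb^[l w] (σb^[p] (f w)) := Function.iterate_add_apply σb (l w) p _
      _ = σb^[l w] (σb^[q] (f z)) := by rw [hpq]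
      _ = σb^[l w + q] (f z) := (Function.iterate_add_apply σb (l w) q _).symm

lemma orb_rel {α β : Type*} (σa : α → α) (σb : β → β) (f : α → β) (k l : α → ℕ)
    (hco : ∀ z, σb^[k z] (f (σa z)) = σb^[l z] (f z)) (K L : ℕ) (y x : α)
    (hKL : σa^[K] y = σa^[L] x) :
    ∃ a b : ℕ, σb^[a] (f y) = σb^[b] (f x) := by
  obtain ⟨p1, q1, h1⟩ := iter_coc σa σb f k l hco K y
  obtain ⟨p2, q2, h2⟩ := iter_coc σa σb f k l hco L x
  rw [hKL] at h1
  refine ⟨p2 + q1, p1 + q2, ?_⟩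
  calc σb^[p2 + q1] (f y) = σb^[p2] (σb^[q1] (f y)) := Function.iterate_add_apply _ _ _ _
    _ = σb^[p2] (σb^[p1] (f (σa^[L] x))) := by rw [h1]
    _ = σb^[p2 + p1] (f (σa^[L] x)) := (Function.iterate_add_apply _ _ _ _).symm
    _ = σb^[p1 + p2] (f (σa^[L] x)) := by rw [add_comm]
    _ = σb^[p1] (σb^[p2] (f (σa^[L] x))) := Function.iterate_add_apply _ _ _ _
    _ = σb^[p1] (σb^[q2] (f x)) := by rw [h2]
    _ = σb^[p1 + q2] (f x) := (Function.iterate_add_apply _ _ _ _).symm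

/-! ### Continuous cocycles for a conjugating homeomorphism -/

lemma side {N N' : ℕ} (A : Matrix (Fin N) (Fin N) ℕ) (B : Matrix (Fin N') (Fin N') ℕ)
    (hIt : ConditionI Aᵀ) (h : MarkovShift A ≃ₜ MarkovShift B)
    (hc : ∀ τ : MarkovShift A ≃ₜ MarkovShift A, τ ∈ topFullGroup A →
      (h.symm.trans τ).trans h ∈ topFullGroup B) :
    ∃ k l : MarkovShift A → ℕ, Continuous k ∧ Continuous l ∧
      ∀ z, (mshift B)^[k z] (h (mshift A z)) = (mshift B)^[l z] (h z) := by
  apply glue (P := fun z p q => (mshift B)^[p] (h (mshift A z)) = (mshift B)^[q] (h z))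
  intro z
  obtain ⟨U, hUc, hUm, τ, hτ, hτσ⟩ := local_real A hIt z
  obtain ⟨-, k, l, hk, hl, hco⟩ := hc τ hτ
  refine ⟨U, hUc, hUm, fun w => k (h w), fun w => l (h w),
    hk.comp h.continuous, hl.comp h.continuous, ?_⟩
  intro w hw
  have hmain := hco (h w)
  have he : ((h.symm.trans τ).trans h) (h w) = h (mshift A w) := by
    simp only [Homeomorph.trans_apply, Homeomorph.symm_apply_apply]
    rw [hτσ w hw]
  rw [he] at hmain
  exact hmain

end CKAux

/-- assume `A, B, Aᵀ, Bᵀ` all satisfy condition (I).  If some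
homeomorphism `h : X_A → X_B` conjugates `[σ_A]_c` onto `[σ_B]_c`, then `(X_A, σ_A)`
and `(X_B, σ_B)` are topologically orbit equivalent. -/
theorem topOrbitEquiv_of_conj_topFullGroup
    {N N' : ℕ} (A : Matrix (Fin N) (Fin N) ℕ) (B : Matrix (Fin N') (Fin N') ℕ)
    (hA : ∀ i j, A i j = 0 ∨ A i j = 1) (hB : ∀ i j, B i j = 0 ∨ B i j = 1)
    (hIA : ConditionI A) (hIAt : ConditionI Aᵀ)
    (hIB : ConditionI B) (hIBt : ConditionI Bᵀ)
    (hconj : ∃ h : MarkovShift A ≃ₜ MarkovShift B,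
      (fun τ : MarkovShift A ≃ₜ MarkovShift A => (h.symm.trans τ).trans h) ''
        topFullGroup A = topFullGroup B) :
    TopOrbitEquiv A B := by
  obtain ⟨h, hEq⟩ := hconj
  have fwd : ∀ τ : MarkovShift A ≃ₜ MarkovShift A, τ ∈ topFullGroup A →
      (h.symm.trans τ).trans h ∈ topFullGroup B := by
    intro τ hτ; rw [← hEq]; exact Set.mem_image_of_mem _ hτ
  have bwd : ∀ ρ : MarkovShift B ≃ₜ MarkovShift B, ρ ∈ topFullGroup B →
      (h.symm.symm.trans ρ).trans h.symm ∈ topFullGroup A := by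
    intro ρ hρ
    rw [← hEq] at hρ
    obtain ⟨τ, hτ, hτρ⟩ := hρ
    have hidd : (h.symm.symm.trans ρ).trans h.symm = τ := by
      apply Homeomorph.ext
      intro y
      rw [← hτρ]
      simp [Homeomorph.trans_apply]
    rw [hidd]; exact hτ
  obtain ⟨k₁, l₁, hk₁, hl₁, hco₁⟩ := CKAux.side A B hIAt h fwd
  obtain ⟨k₂, l₂, hk₂, hl₂, hco₂⟩ := CKAux.side B A hIBt h.symm bwd
  refine ⟨h, ?_, ⟨k₁, l₁, hk₁, hl₁, hco₁⟩, ⟨k₂, l₂, hk₂, hl₂, hco₂⟩⟩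
  intro x
  ext Y
  constructor
  · rintro ⟨y, ⟨K, L, hKL⟩, rfl⟩
    exact CKAux.orb_rel (mshift A) (mshift B) (⇑h) k₁ l₁ hco₁ K L y x hKL
  · rintro ⟨K, L, hKL⟩
    obtain ⟨a, b, hab⟩ := CKAux.orb_rel (mshift B) (mshift A) (⇑h.symm) k₂ l₂ hco₂ K L Y (h x) hKL
    rw [Homeomorph.symm_apply_apply] at hab
    exact ⟨h.symm Y, ⟨a, b, hab⟩, by simp⟩
end

section
/- If (X_A, σ_A) and (X_B, σ_B) are topologically orbit equivalent, then there exists a homeomorphism h : X_A → X_B such that h ∘ [σ_A]_c ∘ h^{-1} = [σ_B]_c; indeed any homeomorphism implementing the topological orbit equivalence conjugates [σ_A]_c onto [σ_B]_c. -/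
open Matrix

lemma mshift_continuous {N : ℕ} (A : Matrix (Fin N) (Fin N) ℕ) :
    Continuous (mshift A) := by
  apply Continuous.subtype_mk
  exact continuous_pi fun n => (continuous_apply (n + 1)).comp continuous_subtype_val

lemma cont_select {X : Type*} [TopologicalSpace X] {F : ℕ → X → ℕ}
    (hF : ∀ m, Continuous (F m)) {n : X → ℕ} (hn : Continuous n) :
    Continuous fun x => F (n x) x := by
  rw [continuous_def]
  intro s _
  have hset : (fun x => F (n x) x) ⁻¹' s = ⋃ m, (n ⁻¹' {m}) ∩ (F m ⁻¹' s) := by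
    ext x
    simp only [Set.mem_preimage, Set.mem_iUnion, Set.mem_inter_iff, Set.mem_singleton_iff]
    constructor
    · intro hx; exact ⟨n x, rfl, hx⟩
    · rintro ⟨m, rfl, hx⟩; exact hx
  rw [hset]
  exact isOpen_iUnion fun m =>
    (hn.isOpen_preimage _ (isOpen_discrete _)).inter
      ((hF m).isOpen_preimage _ (isOpen_discrete _))

lemma cocycle_iterate {N N' : ℕ} {A : Matrix (Fin N) (Fin N) ℕ}
    {B : Matrix (Fin N') (Fin N') ℕ} (h : MarkovShift A ≃ₜ MarkovShift B)
    (k₁ l₁ : MarkovShift A → ℕ) (hk₁ : Continuous k₁) (hl₁ : Continuous l₁)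
    (hcoc₁ : ∀ x, (mshift B)^[k₁ x] (h (mshift A x)) = (mshift B)^[l₁ x] (h x))
    (m : ℕ) :
    ∃ K L : MarkovShift A → ℕ, Continuous K ∧ Continuous L ∧
      ∀ x, (mshift B)^[K x] (h ((mshift A)^[m] x)) = (mshift B)^[L x] (h x) := by
  induction m with
  | zero => exact ⟨fun _ => 0, fun _ => 0, continuous_const, continuous_const, fun _ => rfl⟩
  | succ m ih =>
    obtain ⟨K, L, hK, hL, hKL⟩ := ih
    have hcm : Continuous fun x : MarkovShift A => (mshift A)^[m] x :=
      (mshift_continuous A).iterate m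
    refine ⟨fun x => K x + k₁ ((mshift A)^[m] x),
      fun x => l₁ ((mshift A)^[m] x) + L x,
      hK.add (hk₁.comp hcm), (hl₁.comp hcm).add hL, fun x => ?_⟩
    calc (mshift B)^[K x + k₁ ((mshift A)^[m] x)] (h ((mshift A)^[m + 1] x))
        = (mshift B)^[K x] ((mshift B)^[k₁ ((mshift A)^[m] x)]
            (h (mshift A ((mshift A)^[m] x)))) := by
          rw [Function.iterate_add_apply, Function.iterate_succ_apply']
      _ = (mshift B)^[K x] ((mshift B)^[l₁ ((mshift A)^[m] x)] (h ((mshift A)^[m] x))) := by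
          rw [hcoc₁]
      _ = (mshift B)^[l₁ ((mshift A)^[m] x)] ((mshift B)^[K x] (h ((mshift A)^[m] x))) := by
          rw [← Function.iterate_add_apply, ← Function.iterate_add_apply, Nat.add_comm]
      _ = (mshift B)^[l₁ ((mshift A)^[m] x)] ((mshift B)^[L x] (h x)) := by rw [hKL]
      _ = (mshift B)^[l₁ ((mshift A)^[m] x) + L x] (h x) :=
          (Function.iterate_add_apply _ _ _ _).symm

lemma cocycle_fun {N N' : ℕ} {A : Matrix (Fin N) (Fin N) ℕ}
    {B : Matrix (Fin N') (Fin N') ℕ} (h : MarkovShift A ≃ₜ MarkovShift B)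
    (k₁ l₁ : MarkovShift A → ℕ) (hk₁ : Continuous k₁) (hl₁ : Continuous l₁)
    (hcoc₁ : ∀ x, (mshift B)^[k₁ x] (h (mshift A x)) = (mshift B)^[l₁ x] (h x))
    (n : MarkovShift A → ℕ) (hn : Continuous n) :
    ∃ K L : MarkovShift A → ℕ, Continuous K ∧ Continuous L ∧
      ∀ x, (mshift B)^[K x] (h ((mshift A)^[n x] x)) = (mshift B)^[L x] (h x) := by
  choose K L hK hL hKL using cocycle_iterate h k₁ l₁ hk₁ hl₁ hcoc₁
  exact ⟨fun x => K (n x) x, fun x => L (n x) x, cont_select hK hn, cont_select hL hn,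
    fun x => hKL (n x) x⟩

lemma conj_mem {N N' : ℕ} {A : Matrix (Fin N) (Fin N) ℕ}
    {B : Matrix (Fin N') (Fin N') ℕ} (h : MarkovShift A ≃ₜ MarkovShift B)
    (horb : ∀ x, h '' orb A x = orb B (h x))
    (k₁ l₁ : MarkovShift A → ℕ) (hk₁ : Continuous k₁) (hl₁ : Continuous l₁)
    (hcoc₁ : ∀ x, (mshift B)^[k₁ x] (h (mshift A x)) = (mshift B)^[l₁ x] (h x))
    (τ : MarkovShift A ≃ₜ MarkovShift A) (hτ : τ ∈ topFullGroup A) :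
    (h.symm.trans τ).trans h ∈ topFullGroup B := by
  obtain ⟨hfull, k, l, hk, hl, hkl⟩ := hτ
  constructor
  · intro y
    have h2 : h (τ (h.symm y)) ∈ orb B (h (h.symm y)) := by
      rw [← horb]; exact ⟨_, hfull _, rfl⟩
    simpa using h2
  · obtain ⟨K1, L1, hK1, hL1, hKL1⟩ :=
      cocycle_fun h k₁ l₁ hk₁ hl₁ hcoc₁ (fun z => k (τ.symm z)) (hk.comp τ.symm.continuous)
    obtain ⟨K2, L2, hK2, hL2, hKL2⟩ := cocycle_fun h k₁ l₁ hk₁ hl₁ hcoc₁ l hl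
    refine ⟨fun y => K2 (h.symm y) + L1 (τ (h.symm y)),
      fun y => K1 (τ (h.symm y)) + L2 (h.symm y),
      (hK2.comp h.symm.continuous).add
        (hL1.comp (τ.continuous.comp h.symm.continuous)),
      (hK1.comp (τ.continuous.comp h.symm.continuous)).add
        (hL2.comp h.symm.continuous), fun y => ?_⟩
    set x := h.symm y with hx
    have h1 := hKL1 (τ x)
    rw [τ.symm_apply_apply, hkl x] at h1
    have h2 := hKL2 x
    have hy : h x = y := h.apply_symm_apply y
    simp only [Homeomorph.trans_apply]
    calc (mshift B)^[K2 x + L1 (τ x)] (h (τ x))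
        = (mshift B)^[K2 x] ((mshift B)^[L1 (τ x)] (h (τ x))) :=
          Function.iterate_add_apply _ _ _ _
      _ = (mshift B)^[K2 x] ((mshift B)^[K1 (τ x)] (h ((mshift A)^[l x] x))) := by rw [h1]
      _ = (mshift B)^[K1 (τ x)] ((mshift B)^[K2 x] (h ((mshift A)^[l x] x))) := by
          rw [← Function.iterate_add_apply, ← Function.iterate_add_apply, Nat.add_comm]
      _ = (mshift B)^[K1 (τ x)] ((mshift B)^[L2 x] (h x)) := by rw [h2]
      _ = (mshift B)^[K1 (τ x) + L2 x] (h x) := (Function.iterate_add_apply _ _ _ _).symm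
      _ = (mshift B)^[K1 (τ x) + L2 x] y := by rw [hy]


/-- if `h : X_A → X_B` implements a topological orbit equivalence between
`(X_A, σ_A)` and `(X_B, σ_B)`, then `h` conjugates `[σ_A]_c` onto `[σ_B]_c` (so in
particular such a conjugating homeomorphism exists). -/
theorem conj_topFullGroup_of_topOrbitEquiv
    {N N' : ℕ} (A : Matrix (Fin N) (Fin N) ℕ) (B : Matrix (Fin N') (Fin N') ℕ)
    (hA : ∀ i j, A i j = 0 ∨ A i j = 1) (hB : ∀ i j, B i j = 0 ∨ B i j = 1)
    (h : MarkovShift A ≃ₜ MarkovShift B)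
    (horb : ∀ x, h '' orb A x = orb B (h x))
    (k₁ l₁ : MarkovShift A → ℕ) (hk₁ : Continuous k₁) (hl₁ : Continuous l₁)
    (hcoc₁ : ∀ x, (mshift B)^[k₁ x] (h (mshift A x)) = (mshift B)^[l₁ x] (h x))
    (k₂ l₂ : MarkovShift B → ℕ) (hk₂ : Continuous k₂) (hl₂ : Continuous l₂)
    (hcoc₂ : ∀ y, (mshift A)^[k₂ y] (h.symm (mshift B y)) = (mshift A)^[l₂ y] (h.symm y)) :
    (fun τ : MarkovShift A ≃ₜ MarkovShift A => (h.symm.trans τ).trans h) ''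
      topFullGroup A = topFullGroup B := by
  have horb' : ∀ y, h.symm '' orb B y = orb A (h.symm y) := by
    intro y
    have h0 := horb (h.symm y)
    rw [h.apply_symm_apply] at h0
    rw [← h0, Set.image_image]
    simp
  ext ρ
  constructor
  · rintro ⟨τ, hτ, rfl⟩
    exact conj_mem h horb k₁ l₁ hk₁ hl₁ hcoc₁ τ hτ
  · intro hρ
    refine ⟨(h.trans ρ).trans h.symm, ?_, ?_⟩
    · have := conj_mem h.symm horb' k₂ l₂ hk₂ hl₂ hcoc₂ ρ hρ
      simpa using this
    · ext y
      simp
end
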